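/- arXiv:1509.07248 — 5 statements merged into one kernel-verified Lean document; each statement's English description precedes it below -/
import Mathlib

section
/- If (K,L) is a finite Gelfand pair, then the zonal spherical functions ω_0,...,ω_{s-1} form a basis of the Hecke algebra of bi-L-invariant functions on K, where s is the number of double cosets L\K/L. -/
open scoped BigOperators

attribute [local instance] Classical.propDecidable

noncomputable def avgIdem (K : Type) [Group K] [Fintype K] (L : Subgroup K) :
    MonoidAlgebra ℂ K :=
  (Fintype.card L : ℂ)⁻¹ • ∑ h : L, MonoidAlgebra.of ℂ K (h : K)

def IsGelfandPair (K : Type) [Group K] [Fintype K] (L : Subgroup K) : Prop :=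
  ∀ x y : MonoidAlgebra ℂ K,
    (avgIdem K L * x * avgIdem K L) * (avgIdem K L * y * avgIdem K L) =
      (avgIdem K L * y * avgIdem K L) * (avgIdem K L * x * avgIdem K L)

/-- the permutation character of `K` acting on `K ⧸ L` (the character of `ℂK e_L`) -/
noncomputable def permChar (K : Type) [Group K] [Fintype K] (L : Subgroup K) (g : K) : ℕ :=
  Nat.card {x : K ⧸ L // g • x = x}

/-- the space of bi-`L`-invariant functions on `K` (the Hecke algebra, as a subspace of
functions `K → ℂ`) -/
noncomputable def heckeSpace (K : Type) [Group K] (L : Subgroup K) : Submodule ℂ (K → ℂ) where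
  carrier := {f : K → ℂ | ∀ g : K, ∀ h ∈ L, ∀ h' ∈ L, f (h * g * h') = f g}
  add_mem' := by
    intro a b ha hb g h hh h' hh'
    simp only [Pi.add_apply, ha g h hh h' hh', hb g h hh h' hh']
  zero_mem' := by
    intro g h hh h' hh'
    rfl
  smul_mem' := by
    intro c a ha g h hh h' hh'
    simp only [Pi.smul_apply, ha g h hh h' hh']

section Aux

open CategoryTheory Module MulAction

set_option linter.unusedSectionVars false

variable {K : Type} [Group K] [Fintype K] (L : Subgroup K)

lemma zsf_char_one_ne_zero (W : FDRep ℂ K) [Simple W] : W.character 1 ≠ 0 := by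
  rw [FDRep.char_one]
  have h := CategoryTheory.id_nonzero W
  intro hc
  norm_cast at hc
  rw [Module.finrank_zero_iff (R := ℂ) (M := W)] at hc
  apply h
  apply Action.hom_ext
  ext x
  exact hc.elim _ _

lemma zsf_schur_scalar (W : FDRep ℂ K) [Simple W] (T : W →ₗ[ℂ] W)
    (hT : ∀ g : K, T ∘ₗ W.ρ g = (W.ρ g) ∘ₗ T) : ∃ c : ℂ, T = c • LinearMap.id := by
  let f : W ⟶ W := ⟨FGModuleCat.ofHom T, fun g => by
    ext x
    exact LinearMap.congr_fun (hT g) x⟩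
  have h1 : finrank ℂ (W ⟶ W) = 1 := by
    rw [FDRep.finrank_hom_simple_simple W W, if_pos ⟨Iso.refl W⟩]
  have h2 : (𝟙 W : W ⟶ W) ≠ 0 := CategoryTheory.id_nonzero W
  obtain ⟨c, hc⟩ := (finrank_eq_one_iff_of_nonzero' (𝟙 W : W ⟶ W) h2).mp h1 f
  refine ⟨c, ?_⟩
  have h4 := congrArg (fun (m : W ⟶ W) => m.hom) hc
  ext x
  have h3 : (c • (𝟙 W : W ⟶ W)).hom = c • (𝟙 W : W ⟶ W).hom := rfl
  rw [h3] at h4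
  calc T x = f.hom x := rfl
  _ = (c • (𝟙 W : W ⟶ W).hom) x := by rw [h4]
  _ = c • x := rfl

lemma zsf_orth (V W : FDRep ℂ K) [Simple V] [Simple W] :
    ∑ g : K, V.character g * W.character g⁻¹ =
      if Nonempty (V ≅ W) then (Fintype.card K : ℂ) else 0 := by
  haveI : Invertible (Nat.card K : ℂ) :=
    invertibleOfNonzero (by rw [Nat.card_eq_fintype_card]; exact_mod_cast Fintype.card_ne_zero)
  have h := FDRep.char_orthonormal (k := ℂ) (G := K) V W
  have hc : (Nat.card K : ℂ) = (Fintype.card K : ℂ) := by rw [Nat.card_eq_fintype_card]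
  have h2 := congrArg (fun z => (Nat.card K : ℂ) * z) h
  simp only [smul_eq_mul, ← mul_assoc, mul_inv_cancel_of_invertible, one_mul] at h2
  rw [hc] at h2
  rw [show (∑ g : K, V.character g * W.character g⁻¹) =
    ∑ g : K, V.character g * W.character g⁻¹ from rfl, h2]
  split <;> simp

lemma zsf_gen_orth (V W : FDRep ℂ K) [Simple V] [Simple W] (t : K) :
    W.character 1 * ∑ g : K, V.character g * W.character (g⁻¹ * t) =
      (if Nonempty (V ≅ W) then (Fintype.card K : ℂ) else 0) * W.character t := by
  set T : Module.End ℂ W := ∑ g : K, V.character g • (W.ρ g⁻¹ : Module.End ℂ W) with hTdef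
  have hcomm : ∀ h : K, T ∘ₗ W.ρ h = (W.ρ h) ∘ₗ T := by
    intro h
    show T * W.ρ h = (W.ρ h : Module.End ℂ W) * T
    rw [hTdef, Finset.sum_mul, Finset.mul_sum]
    refine Fintype.sum_equiv (MulAut.conj h⁻¹).toEquiv _ _ ?_
    intro g
    show (V.character g • W.ρ g⁻¹) * W.ρ h =
      W.ρ h * (V.character (h⁻¹ * g * h⁻¹⁻¹) • W.ρ (h⁻¹ * g * h⁻¹⁻¹)⁻¹)
    rw [smul_mul_assoc, mul_smul_comm, FDRep.char_conj, ← map_mul, ← map_mul]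
    congr 2
    group
  obtain ⟨c, hc⟩ := zsf_schur_scalar W T hcomm
  have htr : LinearMap.trace ℂ W T = ∑ g : K, V.character g * W.character g⁻¹ := by
    rw [hTdef, map_sum]
    refine Finset.sum_congr rfl fun g _ => ?_
    rw [LinearMap.map_smul, smul_eq_mul]
    rfl
  have htrc : LinearMap.trace ℂ W T = c * W.character 1 := by
    rw [hc, LinearMap.map_smul, LinearMap.trace_id, smul_eq_mul, FDRep.char_one]
  have hmain : ∑ g : K, V.character g * W.character (g⁻¹ * t) = c * W.character t := by
    have h1 : LinearMap.trace ℂ W (T * W.ρ t) =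
        ∑ g : K, V.character g * W.character (g⁻¹ * t) := by
      rw [hTdef, Finset.sum_mul, map_sum]
      refine Finset.sum_congr rfl fun g _ => ?_
      rw [smul_mul_assoc, LinearMap.map_smul, smul_eq_mul, ← map_mul]
      rfl
    have h2 : LinearMap.trace ℂ W (T * W.ρ t) = c * W.character t := by
      have hid : (LinearMap.id : Module.End ℂ W) * W.ρ t = W.ρ t := one_mul _
      rw [hc, smul_mul_assoc, LinearMap.map_smul, smul_eq_mul, hid]
      rfl
    rw [← h1, h2]
  rw [hmain, ← zsf_orth V W, htr.symm.trans htrc]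
  ring

lemma zsf_sum_mem_subgroup (f : K → ℂ) :
    ∑ u : K, (if u ∈ L then f u else 0) = ∑ h : L, f ↑h := by
  rw [← Finset.sum_filter]
  exact Finset.sum_subtype _ (by simp) f

lemma zsf_stab_sum (V : FDRep ℂ K) (x : K ⧸ L) :
    ∑ g : K, (if g • x = x then V.character g⁻¹ else 0)
      = ∑ h : L, V.character ((h : K)⁻¹) := by
  obtain ⟨k, rfl⟩ := QuotientGroup.mk_surjective x
  rw [← zsf_sum_mem_subgroup L (fun u => V.character u⁻¹)]
  refine Fintype.sum_equiv (MulAut.conj k⁻¹).toEquiv _ _ ?_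
  intro u
  have hcond : (u • (↑k : K ⧸ L) = ↑k) ↔ (k⁻¹ * u * k⁻¹⁻¹ ∈ L) := by
    rw [MulAction.Quotient.smul_mk, QuotientGroup.eq, smul_eq_mul,
      show (u * k)⁻¹ * k = (k⁻¹ * u * k⁻¹⁻¹)⁻¹ by group, L.inv_mem_iff]
  have hval : V.character u⁻¹ = V.character ((k⁻¹ * u * k⁻¹⁻¹)⁻¹) := by
    rw [show (k⁻¹ * u * k⁻¹⁻¹)⁻¹ = k⁻¹ * u⁻¹ * k⁻¹⁻¹ by group, FDRep.char_conj]
  exact if_congr hcond hval rfl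

lemma zsf_permChar_sum (g : K) :
    (permChar K L g : ℂ) = ∑ x : K ⧸ L, (if g • x = x then (1 : ℂ) else 0) := by
  rw [Finset.sum_boole]
  norm_cast
  rw [permChar, Nat.card_eq_fintype_card, Fintype.card_subtype]

lemma zsf_perm_pair (V : FDRep ℂ K) :
    ∑ g : K, (permChar K L g : ℂ) * V.character g⁻¹
      = (Fintype.card (K ⧸ L) : ℂ) * ∑ h : L, V.character ((h : K)⁻¹) := by
  calc ∑ g : K, (permChar K L g : ℂ) * V.character g⁻¹
      = ∑ g : K, ∑ x : K ⧸ L, (if g • x = x then V.character g⁻¹ else 0) := by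
        refine Finset.sum_congr rfl fun g _ => ?_
        rw [zsf_permChar_sum, Finset.sum_mul]
        refine Finset.sum_congr rfl fun x _ => ?_
        rw [ite_mul, one_mul, zero_mul]
    _ = ∑ x : K ⧸ L, ∑ g : K, (if g • x = x then V.character g⁻¹ else 0) := Finset.sum_comm
    _ = ∑ _x : K ⧸ L, ∑ h : L, V.character ((h : K)⁻¹) :=
        Finset.sum_congr rfl fun x _ => zsf_stab_sum L V x
    _ = (Fintype.card (K ⧸ L) : ℂ) * ∑ h : L, V.character ((h : K)⁻¹) := by
        rw [Finset.sum_const, Finset.card_univ, nsmul_eq_mul]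

lemma zsf_permChar_inv (g : K) : permChar K L g⁻¹ = permChar K L g := by
  unfold permChar
  apply Nat.card_congr
  apply Equiv.subtypeEquivRight
  intro x
  constructor
  · intro h; conv_lhs => rw [← h]
    rw [smul_smul, mul_inv_cancel, one_smul]
  · intro h; conv_lhs => rw [← h]
    rw [smul_smul, inv_mul_cancel, one_smul]

lemma zsf_doset_mk_eq {a b : K} (h : ∃ x ∈ L, ∃ y ∈ L, b = x * a * y) :
    DoubleCoset.mk (L : Subgroup K) L a = DoubleCoset.mk L L b :=
  Quotient.sound' (DoubleCoset.rel_iff.mpr h)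

lemma zsf_doset_mk_eq_iff {a b : K} :
    DoubleCoset.mk (L : Subgroup K) L a = DoubleCoset.mk L L b ↔ ∃ x ∈ L, ∃ y ∈ L, b = x * a * y := by
  rw [← DoubleCoset.rel_iff (H := L) (K := L)]
  exact Quotient.eq''

/-- map sending a pair of cosets to a double coset -/
noncomputable def pairToDoset (p : (K ⧸ L) × (K ⧸ L)) : DoubleCoset.Quotient (L : Set K) L :=
  DoubleCoset.mk L L (p.1.out⁻¹ * p.2.out)

lemma pairToDoset_mk (a b : K) :
    pairToDoset L (↑a, ↑b) = DoubleCoset.mk L L (a⁻¹ * b) := by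
  unfold pairToDoset
  have ha : ((↑a : K ⧸ L).out)⁻¹ * a ∈ L := by
    rw [← QuotientGroup.eq]
    simp [QuotientGroup.out_eq']
  have hb : ((↑b : K ⧸ L).out)⁻¹ * b ∈ L := by
    rw [← QuotientGroup.eq]
    simp [QuotientGroup.out_eq']
  apply zsf_doset_mk_eq
  refine ⟨((↑a : K ⧸ L).out⁻¹ * a)⁻¹, L.inv_mem ha, (↑b : K ⧸ L).out⁻¹ * b, hb, ?_⟩
  group

lemma pairToDoset_smul (g : K) (p : (K ⧸ L) × (K ⧸ L)) :
    pairToDoset L (g • p) = pairToDoset L p := by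
  obtain ⟨x, y⟩ := p
  obtain ⟨a, rfl⟩ := QuotientGroup.mk_surjective x
  obtain ⟨b, rfl⟩ := QuotientGroup.mk_surjective y
  have : g • ((↑a : K ⧸ L), (↑b : K ⧸ L)) = (↑(g * a), ↑(g * b)) := by
    rw [Prod.smul_def, MulAction.Quotient.smul_mk, MulAction.Quotient.smul_mk]
    rfl
  rw [this, pairToDoset_mk, pairToDoset_mk]
  congr 1
  group

/-- the induced map from orbits to double cosets -/
noncomputable def orbitToDoset (q : orbitRel.Quotient K ((K ⧸ L) × (K ⧸ L))) :
    DoubleCoset.Quotient (L : Set K) L :=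
  Quotient.liftOn' q (pairToDoset L) (by
    intro p1 p2 h
    obtain ⟨g, hg⟩ := h
    rw [← hg, pairToDoset_smul])

lemma orbitToDoset_bij : Function.Bijective (orbitToDoset L) := by
  constructor
  · intro q1 q2 h
    obtain ⟨p1, rfl⟩ := Quotient.exists_rep q1
    obtain ⟨p2, rfl⟩ := Quotient.exists_rep q2
    obtain ⟨x1, y1⟩ := p1
    obtain ⟨x2, y2⟩ := p2
    obtain ⟨a, rfl⟩ := QuotientGroup.mk_surjective x1
    obtain ⟨b, rfl⟩ := QuotientGroup.mk_surjective y1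
    obtain ⟨u, rfl⟩ := QuotientGroup.mk_surjective x2
    obtain ⟨v, rfl⟩ := QuotientGroup.mk_surjective y2
    have h' : DoubleCoset.mk (L : Subgroup K) L (a⁻¹ * b) = DoubleCoset.mk L L (u⁻¹ * v) := by
      rw [← pairToDoset_mk, ← pairToDoset_mk]
      exact h
    rw [zsf_doset_mk_eq_iff] at h'
    obtain ⟨x, hx, y, hy, hxy⟩ := h'
    set g := u * x * a⁻¹ with hg
    apply Quotient.sound'
    refine ⟨g⁻¹, ?_⟩
    have h1 : g • (↑a : K ⧸ L) = ↑u := by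
      rw [MulAction.Quotient.smul_mk, QuotientGroup.eq, smul_eq_mul]
      have e : (g * a)⁻¹ * u = x⁻¹ := by rw [hg]; group
      rw [e]
      exact L.inv_mem hx
    have h2 : g • (↑b : K ⧸ L) = ↑v := by
      rw [MulAction.Quotient.smul_mk, QuotientGroup.eq, smul_eq_mul]
      have e : (g * b)⁻¹ * v = b⁻¹ * a * x⁻¹ * (u⁻¹ * v) := by rw [hg]; group
      rw [e, hxy]
      have e2 : b⁻¹ * a * x⁻¹ * (x * (a⁻¹ * b) * y) = y := by group
      rw [e2]
      exact hy
    show g⁻¹ • ((↑u : K ⧸ L), (↑v : K ⧸ L)) = (↑a, ↑b)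
    have : g • ((↑a : K ⧸ L), (↑b : K ⧸ L)) = (↑u, ↑v) := by
      rw [Prod.smul_def, h1, h2]
    rw [← this, inv_smul_smul]
  · intro q
    obtain ⟨g, rfl⟩ := Quotient.exists_rep q
    refine ⟨Quotient.mk _ ((↑(1 : K) : K ⧸ L), (↑g : K ⧸ L)), ?_⟩
    show pairToDoset L _ = _
    rw [pairToDoset_mk, inv_one, one_mul]

lemma zsf_burnside_count :
    ∑ g : K, permChar K L g * permChar K L g
      = Nat.card (orbitRel.Quotient K ((K ⧸ L) × (K ⧸ L))) * Fintype.card K := by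
  classical
  have h1 : ∀ g : K, permChar K L g * permChar K L g
      = Fintype.card (fixedBy ((K ⧸ L) × (K ⧸ L)) g) := by
    intro g
    have e : fixedBy ((K ⧸ L) × (K ⧸ L)) g
        ≃ {x : K ⧸ L // g • x = x} × {x : K ⧸ L // g • x = x} := by
      refine (Equiv.subtypeEquivRight ?_).trans (Equiv.subtypeProdEquivProd)
      intro p
      show g • p = p ↔ _
      rw [Prod.ext_iff, Prod.smul_def]
    rw [Fintype.card_congr e, Fintype.card_prod, permChar, Nat.card_eq_fintype_card]
  have h2 := MulAction.sum_card_fixedBy_eq_card_orbits_mul_card_group K ((K ⧸ L) × (K ⧸ L))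
  calc ∑ g : K, permChar K L g * permChar K L g
      = ∑ g : K, Fintype.card (fixedBy ((K ⧸ L) × (K ⧸ L)) g) :=
        Finset.sum_congr rfl fun g _ => h1 g
    _ = Fintype.card (Quotient (orbitRel K ((K ⧸ L) × (K ⧸ L)))) * Fintype.card K := h2
    _ = Nat.card (orbitRel.Quotient K ((K ⧸ L) × (K ⧸ L))) * Fintype.card K := by
        rw [Nat.card_eq_fintype_card]

lemma zsf_hecke_eq_of_doset (f : K → ℂ) (hf : f ∈ heckeSpace K L) {a b : K}
    (h : DoubleCoset.mk (L : Subgroup K) L a = DoubleCoset.mk L L b) : f a = f b := by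
  have := (DoubleCoset.rel_iff (H := L) (K := L)).mp (Quotient.eq''.mp h)
  obtain ⟨x, hx, y, hy, rfl⟩ := this
  exact (hf a x hx y hy).symm

noncomputable def heckeEquiv : heckeSpace K L ≃ₗ[ℂ] (DoubleCoset.Quotient (L : Set K) L → ℂ) where
  toFun f q := (f : K → ℂ) q.out
  map_add' f g := rfl
  map_smul' c f := rfl
  invFun u := ⟨fun g => u (DoubleCoset.mk L L g), by
    intro g h hh h' hh'
    show u _ = u _
    congr 1
    exact (Quotient.sound' ((DoubleCoset.rel_iff (H := L) (K := L)).mpr ⟨h, hh, h', hh', rfl⟩)).symm⟩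
  left_inv f := by
    ext g
    show (f : K → ℂ) (DoubleCoset.mk L L g).out = (f : K → ℂ) g
    apply zsf_hecke_eq_of_doset L _ f.2
    exact Quotient.out_eq' _
  right_inv u := by
    ext q
    show u (DoubleCoset.mk L L q.out) = u q
    congr 1
    exact Quotient.out_eq' q

lemma zsf_hecke_finrank :
    Module.finrank ℂ (heckeSpace K L) = Nat.card (DoubleCoset.Quotient (L : Set K) L) := by
  letI : Fintype (DoubleCoset.Quotient (L : Set K) L) := Quotient.fintype _
  rw [LinearEquiv.finrank_eq (heckeEquiv L), Module.finrank_pi, Nat.card_eq_fintype_card]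

end Aux

/-- For a Gelfand pair `(K, L)`, the zonal spherical functions `ω_0, …, ω_{s-1}` form a
basis of the Hecke algebra of bi-`L`-invariant functions on `K`, where `s` is the number of
double cosets `L \ K / L`. -/
theorem zsf_basis_of_hecke
    (K : Type) [Group K] [Fintype K] (L : Subgroup K)
    (hGP : IsGelfandPair K L)
    (s : ℕ) (V : Fin s → FDRep ℂ K)
    (hsimple : ∀ i, CategoryTheory.Simple (V i))
    (hdistinct : ∀ i j : Fin s, Nonempty (V i ≅ V j) → i = j)
    (hdecomp : ∀ g : K, (permChar K L g : ℂ) = ∑ i : Fin s, FDRep.character (V i) g)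
    (ω : Fin s → K → ℂ)
    (hω : ∀ i g, ω i g =
      (Fintype.card L : ℂ)⁻¹ *
        ∑ h : L, (starRingEnd ℂ) (FDRep.character (V i) (g * (h : K)))) :
    LinearIndependent ℂ ω ∧
      Submodule.span ℂ (Set.range ω) = heckeSpace K L ∧
      s = Nat.card (DoubleCoset.Quotient (L : Set K) (L : Set K)) := by
  classical
  haveI : ∀ i, CategoryTheory.Simple (V i) := hsimple
  set χ : Fin s → K → ℂ := fun i g => FDRep.character (V i) g with hχ
  have cardK_ne : (Fintype.card K : ℂ) ≠ 0 := by exact_mod_cast Fintype.card_ne_zero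
  have cardL_ne : (Fintype.card L : ℂ) ≠ 0 := by exact_mod_cast Fintype.card_ne_zero
  have cardQ_ne : (Fintype.card (K ⧸ L) : ℂ) ≠ 0 := by exact_mod_cast Fintype.card_ne_zero
  have orth_ij : ∀ i j, ∑ g : K, χ i g * χ j g⁻¹
      = if i = j then (Fintype.card K : ℂ) else 0 := by
    intro i j
    rw [show (∑ g : K, χ i g * χ j g⁻¹) = ∑ g : K, (V i).character g * (V j).character g⁻¹
      from rfl, zsf_orth (V i) (V j)]
    by_cases hij : i = j
    · subst hij
      rw [if_pos ⟨CategoryTheory.Iso.refl _⟩, if_pos rfl]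
    · rw [if_neg (fun hn => hij (hdistinct i j hn)), if_neg hij]
  -- sum of character over L
  have card_fact : (Fintype.card K : ℂ)
      = (Fintype.card (K ⧸ L) : ℂ) * (Fintype.card L : ℂ) := by
    have h := Subgroup.card_eq_card_quotient_mul_card_subgroup L
    rw [Nat.card_eq_fintype_card, Nat.card_eq_fintype_card, Nat.card_eq_fintype_card] at h
    exact_mod_cast h
  have sum_L_inv : ∀ i, ∑ h : L, χ i ((h : K)⁻¹) = (Fintype.card L : ℂ) := by
    intro i
    have h1 := zsf_perm_pair L (V i)
    have h2 : ∑ g : K, (permChar K L g : ℂ) * χ i g⁻¹ = (Fintype.card K : ℂ) := by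
      calc ∑ g : K, (permChar K L g : ℂ) * χ i g⁻¹
          = ∑ g : K, ∑ j, χ j g * χ i g⁻¹ := by
            refine Finset.sum_congr rfl fun g _ => ?_
            rw [hdecomp g, Finset.sum_mul]
        _ = ∑ j, ∑ g : K, χ j g * χ i g⁻¹ := Finset.sum_comm
        _ = ∑ j, if j = i then (Fintype.card K : ℂ) else 0 :=
            Finset.sum_congr rfl fun j _ => orth_ij j i
        _ = (Fintype.card K : ℂ) := by simp
    apply mul_left_cancel₀ cardQ_ne
    rw [← h1, h2, ← card_fact]
  have sum_L : ∀ i, ∑ h : L, χ i (h : K) = (Fintype.card L : ℂ) := by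
    intro i
    rw [← sum_L_inv i]
    refine Fintype.sum_equiv (Equiv.inv L) _ _ ?_
    intro h
    show χ i (h : K) = χ i ((((h⁻¹ : L) : K))⁻¹)
    rw [show (((h⁻¹ : L) : K))⁻¹ = ((h : K)⁻¹)⁻¹ from rfl, inv_inv]
  -- the key pairing computation
  have hA : ∀ i j, χ j 1 *
      ∑ g : K, ((Fintype.card L : ℂ)⁻¹ * ∑ h : L, χ i (g * (h : K))) * χ j g⁻¹
      = if i = j then (Fintype.card K : ℂ) else 0 := by
    intro i j
    have hgen : ∀ h : L, χ j 1 * ∑ g : K, χ i (g * (h : K)) * χ j g⁻¹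
        = (if i = j then (Fintype.card K : ℂ) else 0) * χ j (h : K) := by
      intro h
      have hre : ∑ g : K, χ i g * χ j (g⁻¹ * (h : K))
          = ∑ g : K, χ i (g * (h : K)) * χ j g⁻¹ := by
        refine Fintype.sum_equiv (Equiv.mulRight ((h : K)⁻¹)) _ _ ?_
        intro u
        show χ i u * χ j (u⁻¹ * (h : K)) = χ i (u * (h : K)⁻¹ * (h : K)) * χ j (u * (h : K)⁻¹)⁻¹
        rw [inv_mul_cancel_right, mul_inv_rev, inv_inv]
        congr 1
        exact (FDRep.char_mul_comm (V j) u⁻¹ (h : K)).symm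
      have hite : (if Nonempty (V i ≅ V j) then (Fintype.card K : ℂ) else 0)
          = if i = j then (Fintype.card K : ℂ) else 0 := by
        by_cases hij : i = j
        · subst hij
          rw [if_pos ⟨CategoryTheory.Iso.refl _⟩, if_pos rfl]
        · rw [if_neg (fun hn => hij (hdistinct i j hn)), if_neg hij]
      rw [← hre]
      rw [show (∑ g : K, χ i g * χ j (g⁻¹ * (h : K)))
        = ∑ g : K, (V i).character g * (V j).character (g⁻¹ * (h : K)) from rfl]
      rw [show χ j 1 = (V j).character 1 from rfl, zsf_gen_orth (V i) (V j) (h : K), hite]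
    calc χ j 1 * ∑ g : K, ((Fintype.card L : ℂ)⁻¹ * ∑ h : L, χ i (g * (h : K))) * χ j g⁻¹
        = (Fintype.card L : ℂ)⁻¹ *
            ∑ h : L, (χ j 1 * ∑ g : K, χ i (g * (h : K)) * χ j g⁻¹) := by
          simp only [Finset.mul_sum, Finset.sum_mul, mul_assoc]
          rw [Finset.sum_comm]
          exact Finset.sum_congr rfl fun h _ => Finset.sum_congr rfl fun g _ => by ring
      _ = (Fintype.card L : ℂ)⁻¹ *
            ∑ h : L, (if i = j then (Fintype.card K : ℂ) else 0) * χ j (h : K) := by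
          congr 1
          exact Finset.sum_congr rfl fun h _ => hgen h
      _ = (Fintype.card L : ℂ)⁻¹ * ((if i = j then (Fintype.card K : ℂ) else 0)
            * ∑ h : L, χ j (h : K)) := by simp only [Finset.mul_sum, mul_assoc]
      _ = if i = j then (Fintype.card K : ℂ) else 0 := by
          rw [sum_L j, mul_comm ((Fintype.card L : ℂ)⁻¹), mul_assoc,
            mul_inv_cancel₀ cardL_ne, mul_one]
  -- linear independence
  have li : LinearIndependent ℂ ω := by
    rw [Fintype.linearIndependent_iff]
    intro c hc j
    have hψ : ∀ g : K, ∑ i, (starRingEnd ℂ) (c i) *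
        ((Fintype.card L : ℂ)⁻¹ * ∑ h : L, χ i (g * (h : K))) = 0 := by
      intro g
      have h0 : ∑ i, c i * ω i g = 0 := by
        have h0' := congrFun hc g
        rw [show ((∑ i, c i • ω i) g) = ∑ i, c i * ω i g by
          rw [Finset.sum_apply]; rfl] at h0'
        exact h0'
      calc ∑ i, (starRingEnd ℂ) (c i) *
            ((Fintype.card L : ℂ)⁻¹ * ∑ h : L, χ i (g * (h : K)))
          = ∑ i, (starRingEnd ℂ) (c i * ω i g) := by
            refine Finset.sum_congr rfl fun i _ => ?_
            rw [map_mul]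
            congr 1
            rw [hω i g, map_mul, map_inv₀, map_natCast, map_sum]
            congr 1
            refine Finset.sum_congr rfl fun h _ => ?_
            rw [Complex.conj_conj]
        _ = (starRingEnd ℂ) (∑ i, c i * ω i g) := (map_sum _ _ _).symm
        _ = 0 := by rw [h0, map_zero]
    have hz : ∑ i, (starRingEnd ℂ) (c i) * (if i = j then (Fintype.card K : ℂ) else 0)
        = 0 := by
      calc ∑ i, (starRingEnd ℂ) (c i) * (if i = j then (Fintype.card K : ℂ) else 0)
          = ∑ i, (starRingEnd ℂ) (c i) * (χ j 1 *
              ∑ g : K, ((Fintype.card L : ℂ)⁻¹ * ∑ h : L, χ i (g * (h : K))) * χ j g⁻¹) :=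
            Finset.sum_congr rfl fun i _ => by rw [hA i j]
        _ = ∑ g : K, χ j 1 * ((∑ i, (starRingEnd ℂ) (c i) *
              ((Fintype.card L : ℂ)⁻¹ * ∑ h : L, χ i (g * (h : K)))) * χ j g⁻¹) := by
            simp only [Finset.mul_sum, Finset.sum_mul, mul_assoc]
            rw [Finset.sum_comm]
            exact Finset.sum_congr rfl fun i _ => Finset.sum_congr rfl fun g _ =>
              Finset.sum_congr rfl fun h _ => by ring
        _ = 0 := Finset.sum_eq_zero fun g _ => by rw [hψ g, zero_mul, mul_zero]
    have hz2 : (starRingEnd ℂ) (c j) * (Fintype.card K : ℂ) = 0 := by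
      rw [show (∑ i, (starRingEnd ℂ) (c i) * (if i = j then (Fintype.card K : ℂ) else 0))
          = ∑ i, (if i = j then (starRingEnd ℂ) (c i) * (Fintype.card K : ℂ) else 0) from
          Finset.sum_congr rfl fun i _ => by split_ifs <;> ring] at hz
      rw [Finset.sum_ite_eq' Finset.univ j
        (fun i => (starRingEnd ℂ) (c i) * (Fintype.card K : ℂ)), if_pos (Finset.mem_univ j)]
        at hz
      exact hz
    have hz3 : (starRingEnd ℂ) (c j) = 0 := by
      rcases mul_eq_zero.mp hz2 with h | h
      · exact h
      · exact absurd h cardK_ne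
    have := congrArg (starRingEnd ℂ) hz3
    rwa [Complex.conj_conj, map_zero] at this
  -- membership of ω i in the Hecke space
  have hmem : ∀ i, ω i ∈ heckeSpace K L := by
    intro i
    show ∀ g : K, ∀ h ∈ L, ∀ h' ∈ L, ω i (h * g * h') = ω i g
    intro g h hh h' hh'
    rw [hω, hω]
    congr 1
    refine Fintype.sum_equiv ((Equiv.mulLeft (⟨h', hh'⟩ : L)).trans
      (Equiv.mulRight (⟨h, hh⟩ : L))) _ _ ?_
    intro t
    show (starRingEnd ℂ) ((V i).character (h * g * h' * ↑t))
      = (starRingEnd ℂ) ((V i).character (g * ↑(((⟨h', hh'⟩ : L) * t) * (⟨h, hh⟩ : L))))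
    congr 1
    have hcoe : ((((⟨h', hh'⟩ : L) * t) * (⟨h, hh⟩ : L) : L) : K) = h' * ↑t * h := rfl
    rw [hcoe, show h * g * h' * (↑t : K) = h * (g * (h' * ↑t)) by group,
      FDRep.char_mul_comm, show (g * (h' * (↑t : K))) * h = g * (h' * ↑t * h) by group]
  -- counting double cosets
  have horb : Nat.card (MulAction.orbitRel.Quotient K ((K ⧸ L) × (K ⧸ L)))
      = Nat.card (DoubleCoset.Quotient (L : Set K) (L : Set K)) :=
    Nat.card_congr (Equiv.ofBijective _ (orbitToDoset_bij L))
  have hsum1 : ∑ i : Fin s, ∑ j : Fin s, ∑ g : K, χ i g * χ j g⁻¹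
      = (s : ℂ) * (Fintype.card K : ℂ) := by
    calc ∑ i : Fin s, ∑ j : Fin s, ∑ g : K, χ i g * χ j g⁻¹
        = ∑ i : Fin s, ∑ j : Fin s, (if i = j then (Fintype.card K : ℂ) else 0) :=
          Finset.sum_congr rfl fun i _ => Finset.sum_congr rfl fun j _ => orth_ij i j
      _ = ∑ _i : Fin s, (Fintype.card K : ℂ) := Finset.sum_congr rfl fun i _ => by simp
      _ = (s : ℂ) * (Fintype.card K : ℂ) := by
          rw [Finset.sum_const, Finset.card_univ, Fintype.card_fin, nsmul_eq_mul]
  have hsum2 : ∑ g : K, (permChar K L g : ℂ) * (permChar K L g⁻¹ : ℂ)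
      = ∑ i : Fin s, ∑ j : Fin s, ∑ g : K, χ i g * χ j g⁻¹ := by
    calc ∑ g : K, (permChar K L g : ℂ) * (permChar K L g⁻¹ : ℂ)
        = ∑ g : K, ∑ i : Fin s, ∑ j : Fin s, χ i g * χ j g⁻¹ := by
          refine Finset.sum_congr rfl fun g _ => ?_
          rw [hdecomp g, hdecomp g⁻¹, Finset.sum_mul_sum]
      _ = ∑ i : Fin s, ∑ g : K, ∑ j : Fin s, χ i g * χ j g⁻¹ := Finset.sum_comm
      _ = ∑ i : Fin s, ∑ j : Fin s, ∑ g : K, χ i g * χ j g⁻¹ :=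
          Finset.sum_congr rfl fun i _ => Finset.sum_comm
  have hsum3 : ∑ g : K, (permChar K L g : ℂ) * (permChar K L g⁻¹ : ℂ)
      = (Nat.card (DoubleCoset.Quotient (L : Set K) (L : Set K)) : ℂ) * (Fintype.card K : ℂ) := by
    have hnat : ∑ g : K, permChar K L g * permChar K L g⁻¹
        = Nat.card (DoubleCoset.Quotient (L : Set K) (L : Set K)) * Fintype.card K := by
      calc ∑ g : K, permChar K L g * permChar K L g⁻¹
          = ∑ g : K, permChar K L g * permChar K L g :=
            Finset.sum_congr rfl fun g _ => by rw [zsf_permChar_inv]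
        _ = _ := by rw [zsf_burnside_count, horb]
    calc ∑ g : K, (permChar K L g : ℂ) * (permChar K L g⁻¹ : ℂ)
        = ((∑ g : K, permChar K L g * permChar K L g⁻¹ : ℕ) : ℂ) := by push_cast; rfl
      _ = _ := by rw [hnat]; push_cast; rfl
  have hcard : s = Nat.card (DoubleCoset.Quotient (L : Set K) (L : Set K)) := by
    have := mul_right_cancel₀ cardK_ne (hsum1.symm.trans (hsum2.symm.trans hsum3))
    exact_mod_cast this
  -- span equality
  have hle : Submodule.span ℂ (Set.range ω) ≤ heckeSpace K L := by
    rw [Submodule.span_le]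
    rintro _ ⟨i, rfl⟩
    exact hmem i
  have hfr1 : Module.finrank ℂ (Submodule.span ℂ (Set.range ω)) = s := by
    rw [finrank_span_eq_card li, Fintype.card_fin]
  have hfr2 : Module.finrank ℂ (heckeSpace K L) = s := by
    rw [zsf_hecke_finrank L, ← hcard]
  have hspan : Submodule.span ℂ (Set.range ω) = heckeSpace K L :=
    Submodule.eq_of_le_of_finrank_le hle (by rw [hfr1, hfr2])
  exact ⟨li, hspan, hcard⟩
end

section
/- If (K,L) is a finite Gelfand pair, then the wreath product pair (K ≀ S_n, L ≀ S_n) is also a Gelfand pair. -/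
open scoped BigOperators

attribute [local instance] Classical.propDecidable

/-- permutation action of `S_n` on `K^n` by automorphisms -/
def permAut (n : ℕ) (K : Type) [Group K] : Equiv.Perm (Fin n) →* MulAut (Fin n → K) where
  toFun σ :=
    { Equiv.arrowCongr σ (Equiv.refl K) with
      map_mul' := fun f g => rfl }
  map_one' := by ext f i; rfl
  map_mul' := by intro σ τ; ext f i; rfl

/-- the wreath product `K ≀ S_n` -/
abbrev Wreath (n : ℕ) (K : Type) [Group K] : Type :=
  SemidirectProduct (Fin n → K) (Equiv.Perm (Fin n)) (permAut n K)

noncomputable instance (n : ℕ) (K : Type) [Group K] [Fintype K] : Fintype (Wreath n K) :=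
  Fintype.ofEquiv ((Fin n → K) × Equiv.Perm (Fin n))
    { toFun := fun p => ⟨p.1, p.2⟩
      invFun := fun w => (w.left, w.right)
      left_inv := fun _ => rfl
      right_inv := fun _ => rfl }

/-- the subgroup `L ≀ S_n` of `K ≀ S_n` -/
def wreathSubgroup (n : ℕ) (K : Type) [Group K] (L : Subgroup K) : Subgroup (Wreath n K) where
  carrier := {w : Wreath n K | ∀ i : Fin n, w.left i ∈ L}
  one_mem' := by
    intro i
    simp only [SemidirectProduct.one_left, Pi.one_apply]
    exact L.one_mem
  mul_mem' := by
    intro a b ha hb i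
    rw [SemidirectProduct.mul_left]
    exact L.mul_mem (ha i) (hb _)
  inv_mem' := by
    intro a ha i
    rw [SemidirectProduct.inv_left]
    exact L.inv_mem (ha _)

set_option linter.unusedSectionVars false

section Generic
variable {G : Type} [Group G] [Fintype G] (S : Subgroup G)

local notation "oof" => MonoidAlgebra.of ℂ G

lemma card_ne_zero' : (Fintype.card S : ℂ) ≠ 0 := by
  exact_mod_cast Fintype.card_ne_zero

lemma avgIdem_mul_of {s : G} (hs : s ∈ S) :
    avgIdem G S * oof s = avgIdem G S := by
  unfold avgIdem
  rw [smul_mul_assoc, Finset.sum_mul]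
  congr 1
  have := Fintype.sum_equiv (Equiv.mulRight (⟨s, hs⟩ : S))
    (fun h : S => oof ↑h * oof s) (fun h : S => oof ↑h)
    (fun h => by simp [← map_mul])
  simpa using this

lemma of_mul_avgIdem {s : G} (hs : s ∈ S) :
    oof s * avgIdem G S = avgIdem G S := by
  unfold avgIdem
  rw [mul_smul_comm, Finset.mul_sum]
  congr 1
  have := Fintype.sum_equiv (Equiv.mulLeft (⟨s, hs⟩ : S))
    (fun h : S => oof s * oof ↑h) (fun h : S => oof ↑h)
    (fun h => by simp [← map_mul])
  simpa using this

lemma avgIdem_mul_avgIdem : avgIdem G S * avgIdem G S = avgIdem G S := by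
  nth_rewrite 2 [avgIdem]
  rw [mul_smul_comm, Finset.mul_sum]
  rw [Finset.sum_congr rfl (fun h _ => avgIdem_mul_of S h.2)]
  rw [Finset.sum_const, Finset.card_univ, ← Nat.cast_smul_eq_nsmul ℂ, smul_smul,
    inv_mul_cancel₀ (card_ne_zero' S), one_smul]

lemma isGelfandPair_of_of
    (hS : ∀ g g' : G, avgIdem G S * (oof g * (avgIdem G S * (oof g' * avgIdem G S)))
        = avgIdem G S * (oof g' * (avgIdem G S * (oof g * avgIdem G S)))) :
    IsGelfandPair G S := by
  set e := avgIdem G S with he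
  have key1 : ∀ (g : G) (y : MonoidAlgebra ℂ G),
      e * (oof g * (e * (y * e))) = e * (y * (e * (oof g * e))) := by
    intro g y
    induction y using MonoidAlgebra.induction_on with
    | of g' => exact hS g g'
    | add f₁ f₂ h₁ h₂ =>
        simp only [mul_add, add_mul] at h₁ h₂ ⊢
        rw [h₁, h₂]
    | smul r f hf =>
        simp only [mul_smul_comm, smul_mul_assoc] at hf ⊢
        rw [hf]
  have key : ∀ x y : MonoidAlgebra ℂ G,
      e * (x * (e * (y * e))) = e * (y * (e * (x * e))) := by
    intro x y
    induction x using MonoidAlgebra.induction_on with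
    | of g => exact key1 g y
    | add f₁ f₂ h₁ h₂ =>
        simp only [mul_add, add_mul] at h₁ h₂ ⊢
        rw [h₁, h₂]
    | smul r f hf =>
        simp only [mul_smul_comm, smul_mul_assoc] at hf ⊢
        rw [hf]
  intro x y
  have hassoc : ∀ x y : MonoidAlgebra ℂ G,
      (e * x * e) * (e * y * e) = e * (x * ((e * e) * (y * e))) := by
    intros; noncomm_ring
  rw [hassoc, hassoc, avgIdem_mul_avgIdem, ← he, key]
end Generic


namespace WGPaux

open SemidirectProduct Function

variable {K : Type} [Group K] {n : ℕ}

/-- coordinate embedding `K →* K ≀ Sₙ` -/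
def iota (i : Fin n) : K →* Wreath n K :=
  inl.comp (MonoidHom.mulSingle (fun _ : Fin n => K) i)

lemma iota_apply (i : Fin n) (x : K) : iota i x = (inl (Pi.mulSingle i x) : Wreath n K) := rfl

lemma permAut_apply (σ : Equiv.Perm (Fin n)) (g : Fin n → K) :
    permAut n K σ g = fun j => g (σ⁻¹ j) := rfl

lemma inl_decompose_left (u : Fin n → K) (i : Fin n) :
    (inl u : Wreath n K) = inl (update u i 1) * iota i (u i) := by
  rw [iota_apply, ← map_mul]
  congr 1
  funext j
  by_cases h : j = i
  · subst h; simp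
  · simp [h, update_of_ne h]

lemma inl_decompose_right (u : Fin n → K) (i : Fin n) :
    (inl u : Wreath n K) = iota i (u i) * inl (update u i 1) := by
  rw [iota_apply, ← map_mul]
  congr 1
  funext j
  by_cases h : j = i
  · subst h; simp
  · simp [h, update_of_ne h]

lemma inl_update_mul_iota (u : Fin n → K) (i : Fin n) (x : K) :
    (inl (update u i 1) : Wreath n K) * iota i x = inl (update u i x) := by
  rw [iota_apply, ← map_mul]
  congr 1
  funext j
  by_cases h : j = i
  · subst h; simp
  · simp [h, update_of_ne h]

lemma iota_mul_inl_update (u : Fin n → K) (i : Fin n) (x : K) :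
    iota i x * (inl (update u i 1) : Wreath n K) = inl (update u i x) := by
  rw [iota_apply, ← map_mul]
  congr 1
  funext j
  by_cases h : j = i
  · subst h; simp
  · simp [h, update_of_ne h]

lemma iota_comm_inl {u : Fin n → K} (i : Fin n) (hu : u i = 1) (x : K) :
    iota i x * (inl u : Wreath n K) = inl u * iota i x := by
  rw [iota_apply, ← map_mul, ← map_mul]
  congr 1
  funext j
  by_cases h : j = i
  · subst h; simp [hu]
  · simp [h]

lemma inr_mul_inl (σ : Equiv.Perm (Fin n)) (u : Fin n → K) :
    (inr σ : Wreath n K) * inl u = inl (permAut n K σ u) * inr σ := by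
  rw [inl_aut]
  simp [mul_assoc]

variable (L : Subgroup K)

lemma iota_mem (i : Fin n) (h : L) : iota i (h : K) ∈ wreathSubgroup n K L := by
  intro j
  rw [iota_apply, left_inl]
  by_cases hj : j = i
  · subst hj; simp only [Pi.mulSingle, update_self]; exact h.2
  · simp only [Pi.mulSingle, update_of_ne hj, Function.const_one, Pi.one_apply]
    exact L.one_mem

lemma inl_mem {u : Fin n → K} (hu : ∀ j, u j ∈ L) : (inl u : Wreath n K) ∈ wreathSubgroup n K L := by
  intro j; rw [left_inl]; exact hu j

lemma inr_mem (σ : Equiv.Perm (Fin n)) : (inr σ : Wreath n K) ∈ wreathSubgroup n K L := by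
  intro j; rw [left_inr]; exact L.one_mem

section Alg

open MonoidAlgebra

variable [Fintype K] (L : Subgroup K)

local notation "OFW" => MonoidAlgebra.of ℂ (Wreath n K)
local notation "EW" => avgIdem (Wreath n K) (wreathSubgroup n K L)

/-- coercion of an `L`-tuple to a `K`-tuple -/
def tl (l : Fin n → L) : Fin n → K := fun j => (l j : K)

noncomputable def e0 : MonoidAlgebra ℂ (Wreath n K) :=
  (Fintype.card (Fin n → L) : ℂ)⁻¹ • ∑ l : Fin n → L, OFW (inl (tl L l))

noncomputable def ei (i : Fin n) : MonoidAlgebra ℂ (Wreath n K) :=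
  (Fintype.card L : ℂ)⁻¹ • ∑ h : L, OFW (iota i (h : K))

noncomputable def di (i : Fin n) : MonoidAlgebra ℂ (Wreath n K) :=
  (Fintype.card (Fin n → L) : ℂ)⁻¹ • ∑ l : Fin n → L, OFW (inl (update (tl L l) i 1))

noncomputable def ffp : MonoidAlgebra ℂ (Wreath n K) :=
  (Fintype.card (Equiv.Perm (Fin n)) : ℂ)⁻¹ • ∑ σ : Equiv.Perm (Fin n), OFW (inr σ)

lemma E_absorb_z {w : Wreath n K} (hw : w ∈ wreathSubgroup n K L)
    (z : MonoidAlgebra ℂ (Wreath n K)) : EW * (OFW w * z) = EW * z := by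
  rw [← mul_assoc, avgIdem_mul_of _ hw]

lemma comm_z {a b : MonoidAlgebra ℂ (Wreath n K)} (h : a * b = b * a)
    (z : MonoidAlgebra ℂ (Wreath n K)) : a * (b * z) = b * (a * z) := by
  rw [← mul_assoc, h, mul_assoc]

lemma E_mul_avg_z {ι : Type} [Fintype ι] [Nonempty ι] (f : ι → Wreath n K)
    (hf : ∀ j, f j ∈ wreathSubgroup n K L) (z : MonoidAlgebra ℂ (Wreath n K)) :
    EW * ((((Fintype.card ι : ℂ)⁻¹ • ∑ j, OFW (f j))) * z) = EW * z := by
  rw [smul_mul_assoc, Finset.sum_mul, mul_smul_comm, Finset.mul_sum]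
  rw [Finset.sum_congr rfl fun j _ => E_absorb_z L (hf j) z]
  rw [Finset.sum_const, Finset.card_univ, ← Nat.cast_smul_eq_nsmul ℂ, smul_smul,
    inv_mul_cancel₀ (by exact_mod_cast Fintype.card_ne_zero), one_smul]

lemma avg_mul_E {ι : Type} [Fintype ι] [Nonempty ι] (f : ι → Wreath n K)
    (hf : ∀ j, f j ∈ wreathSubgroup n K L) :
    (((Fintype.card ι : ℂ)⁻¹ • ∑ j, OFW (f j))) * EW = EW := by
  rw [smul_mul_assoc, Finset.sum_mul]
  rw [Finset.sum_congr rfl fun j _ => of_mul_avgIdem _ (hf j)]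
  rw [Finset.sum_const, Finset.card_univ, ← Nat.cast_smul_eq_nsmul ℂ, smul_smul,
    inv_mul_cancel₀ (by exact_mod_cast Fintype.card_ne_zero), one_smul]

lemma tl_mem (l : Fin n → L) : ∀ j, tl L l j ∈ L := fun j => (l j).2

lemma update_one_mem (l : Fin n → L) (i : Fin n) : ∀ j, update (tl L l) i 1 j ∈ L := by
  intro j
  by_cases hj : j = i
  · subst hj; simp [L.one_mem]
  · rw [update_of_ne hj]; exact (l j).2

lemma E_e0_z (z : MonoidAlgebra ℂ (Wreath n K)) : EW * (e0 L * z) = EW * z :=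
  E_mul_avg_z L _ (fun l => inl_mem L (tl_mem L l)) z

lemma E_ei_z (i : Fin n) (z : MonoidAlgebra ℂ (Wreath n K)) : EW * (ei L i * z) = EW * z :=
  E_mul_avg_z L _ (fun h => iota_mem L i h) z

lemma E_di_z (i : Fin n) (z : MonoidAlgebra ℂ (Wreath n K)) : EW * (di L i * z) = EW * z :=
  E_mul_avg_z L _ (fun l => inl_mem L (update_one_mem L l i)) z

lemma ei_mul_E (i : Fin n) : ei L i * EW = EW :=
  avg_mul_E L _ (fun h => iota_mem L i h)

lemma avg_comm {ι : Type} [Fintype ι] (c : ℂ) (f : ι → Wreath n K) (a : Wreath n K)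
    (h : ∀ j, f j * a = a * f j) :
    (c • ∑ j, OFW (f j)) * OFW a = OFW a * (c • ∑ j, OFW (f j)) := by
  rw [smul_mul_assoc, mul_smul_comm]
  congr 1
  rw [Finset.sum_mul, Finset.mul_sum]
  exact Finset.sum_congr rfl fun j _ => by rw [← map_mul, h j, map_mul]

lemma ei_comm_inl (i : Fin n) {u : Fin n → K} (hu : u i = 1) :
    ei L i * OFW (inl u) = OFW (inl u) * ei L i :=
  avg_comm _ _ _ (fun h => (iota_comm_inl i hu (h : K)))

lemma di_comm_iota (i : Fin n) (x : K) :
    di L i * OFW (iota i x) = OFW (iota i x) * di L i :=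
  avg_comm _ _ _ (fun l => (iota_comm_inl i (update_self i 1 (tl L l)) x).symm)

lemma e0_comm_inr (σ : Equiv.Perm (Fin n)) :
    OFW (inr σ) * e0 L = e0 L * OFW (inr σ) := by
  unfold e0
  rw [smul_mul_assoc, mul_smul_comm]
  congr 1
  rw [Finset.sum_mul, Finset.mul_sum]
  have key : ∀ l : Fin n → L,
      OFW (inr σ) * OFW (inl (tl L l))
        = OFW (inl (tl L ((Equiv.arrowCongr σ (Equiv.refl L)) l))) * OFW (inr σ) := by
    intro l
    rw [← map_mul, ← map_mul, inr_mul_inl]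
    rfl
  rw [Finset.sum_congr rfl fun l _ => key l]
  apply Fintype.sum_equiv (Equiv.arrowCongr σ (Equiv.refl L))
    (fun l => OFW (inl (tl L ((Equiv.arrowCongr σ (Equiv.refl L)) l))) * OFW (inr σ))
    (fun m => OFW (inl (tl L m)) * OFW (inr σ)) (fun l => rfl)


def updEquiv (L : Subgroup K) (i : Fin n) : (L × (Fin n → L)) ≃ ((Fin n → L) × L) where
  toFun p := (update p.2 i p.1, p.2 i)
  invFun q := (q.1 i, update q.1 i q.2)
  left_inv p := by
    obtain ⟨h, l⟩ := p
    simp [Function.update_idem]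
  right_inv q := by
    obtain ⟨m, c⟩ := q
    simp [Function.update_idem]

lemma tl_update (l : Fin n → L) (i : Fin n) (h : L) :
    tl L (update l i h) = update (tl L l) i (h : K) := by
  funext j
  by_cases hj : j = i
  · subst hj; simp [tl]
  · simp [tl, update_of_ne hj]

lemma core_sum (i : Fin n) :
    ∑ h : L, ∑ l : Fin n → L, OFW (inl (update (tl L l) i (h : K)))
      = (Fintype.card L : ℂ) • ∑ m : Fin n → L, OFW (inl (tl L m)) := by
  have h1 : ∑ h : L, ∑ l : Fin n → L, OFW (inl (update (tl L l) i (h : K)))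
      = ∑ p : L × (Fin n → L), OFW (inl (update (tl L p.2) i ((p.1 : K)))) :=
    (Fintype.sum_prod_type (f := fun p : L × (Fin n → L) =>
      OFW (inl (update (tl L p.2) i ((p.1 : K)))))).symm
  rw [h1]
  rw [Fintype.sum_equiv (updEquiv L i)
    (fun p : L × (Fin n → L) => OFW (inl (update (tl L p.2) i (p.1 : K))))
    (fun q : (Fin n → L) × L => OFW (inl (tl L q.1)))
    (fun p => by
      show OFW (inl (update (tl L p.2) i (p.1 : K))) = OFW (inl (tl L (update p.2 i p.1)))
      rw [tl_update])]
  rw [Fintype.sum_prod_type (f := fun q : (Fin n → L) × L => OFW (inl (tl L q.1)))]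
  simp only [Finset.sum_const, Finset.card_univ]
  rw [← Finset.smul_sum, ← Nat.cast_smul_eq_nsmul ℂ]

lemma ei_mul_di (i : Fin n) : ei L i * di L i = e0 L := by
  unfold ei di e0
  rw [smul_mul_assoc, mul_smul_comm, smul_smul, Finset.sum_mul_sum]
  have hterm : ∀ (h : L) (l : Fin n → L),
      OFW (iota i (h : K)) * OFW (inl (update (tl L l) i 1))
        = OFW (inl (update (tl L l) i (h : K))) := by
    intro h l
    rw [← map_mul, iota_mul_inl_update]
  rw [Finset.sum_congr rfl fun h _ => Finset.sum_congr rfl fun l _ => hterm h l]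
  rw [core_sum, smul_smul]
  congr 1
  have hL : (Fintype.card L : ℂ) ≠ 0 := by exact_mod_cast Fintype.card_ne_zero
  field_simp

lemma di_mul_ei (i : Fin n) : di L i * ei L i = e0 L := by
  unfold ei di e0
  rw [smul_mul_assoc, mul_smul_comm, smul_smul, Finset.sum_mul_sum]
  have hterm : ∀ (l : Fin n → L) (h : L),
      OFW (inl (update (tl L l) i 1)) * OFW (iota i (h : K))
        = OFW (inl (update (tl L l) i (h : K))) := by
    intro l h
    rw [← map_mul, inl_update_mul_iota]
  rw [Finset.sum_congr rfl fun l _ => Finset.sum_congr rfl fun h _ => hterm l h]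
  rw [Finset.sum_comm, core_sum, smul_smul]
  congr 1
  have hL : (Fintype.card L : ℂ) ≠ 0 := by exact_mod_cast Fintype.card_ne_zero
  field_simp

lemma ei_comm_di (i : Fin n) : ei L i * di L i = di L i * ei L i := by
  rw [ei_mul_di, di_mul_ei]

def subEquiv (L : Subgroup K) : ((Fin n → L) × Equiv.Perm (Fin n)) ≃ wreathSubgroup n K L where
  toFun p := ⟨⟨tl L p.1, p.2⟩, fun i => (p.1 i).2⟩
  invFun h := (fun i => ⟨h.1.left i, h.2 i⟩, h.1.right)
  left_inv p := by
    obtain ⟨l, σ⟩ := p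
    refine Prod.ext ?_ rfl
    funext i
    rfl
  right_inv h := by
    apply Subtype.ext
    exact SemidirectProduct.ext rfl rfl

lemma E_eq : EW = e0 L * ffp := by
  unfold e0 ffp avgIdem
  rw [smul_mul_smul_comm, Finset.sum_mul_sum]
  have hcard : (Fintype.card (wreathSubgroup n K L) : ℂ)
      = (Fintype.card (Fin n → L) : ℂ) * (Fintype.card (Equiv.Perm (Fin n)) : ℂ) := by
    rw [← Nat.cast_mul]
    congr 1
    rw [← Fintype.card_prod]
    exact (Fintype.card_congr (subEquiv L)).symm
  rw [hcard, mul_inv]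
  congr 1
  rw [Finset.sum_congr rfl fun l _ => Finset.sum_congr rfl fun σ _ =>
    (map_mul (MonoidAlgebra.of ℂ (Wreath n K)) (inl (tl L l)) (inr σ)).symm]
  have h2 : ∑ p : (Fin n → L) × Equiv.Perm (Fin n), OFW (inl (tl L p.1) * inr p.2)
      = ∑ l : Fin n → L, ∑ σ : Equiv.Perm (Fin n), OFW (inl (tl L l) * inr σ) :=
    Fintype.sum_prod_type (f := fun p : (Fin n → L) × Equiv.Perm (Fin n) =>
      OFW (inl (tl L p.1) * inr p.2))
  rw [← h2]
  apply Fintype.sum_equiv (subEquiv L).symm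
    (fun h : wreathSubgroup n K L => OFW (h : Wreath n K))
    (fun p => OFW (inl (tl L p.1) * inr p.2))
  intro h
  show OFW (h : Wreath n K) = _
  congr 1
  obtain ⟨⟨u, σ⟩, hmem⟩ := h
  exact SemidirectProduct.mk_eq_inl_mul_inr _ _

lemma shuffle {a b c : MonoidAlgebra ℂ (Wreath n K)} (h : a * b = c * a)
    (z : MonoidAlgebra ℂ (Wreath n K)) : a * (b * z) = c * (a * z) := by
  rw [← mul_assoc, h, mul_assoc]

lemma heckeK (hGP : IsGelfandPair K L) (x y : K) :
    avgIdem K L * MonoidAlgebra.of ℂ K x * avgIdem K L * MonoidAlgebra.of ℂ K y * avgIdem K L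
      = avgIdem K L * MonoidAlgebra.of ℂ K y * avgIdem K L * MonoidAlgebra.of ℂ K x
          * avgIdem K L := by
  have h := hGP (MonoidAlgebra.of ℂ K x) (MonoidAlgebra.of ℂ K y)
  have h2 : ∀ u v : MonoidAlgebra ℂ K,
      (avgIdem K L * u * avgIdem K L) * (avgIdem K L * v * avgIdem K L)
        = avgIdem K L * u * (avgIdem K L * avgIdem K L) * v * avgIdem K L := by
    intros; noncomm_ring
  rw [h2, h2, avgIdem_mul_avgIdem] at h
  exact h

noncomputable def phi (i : Fin n) : MonoidAlgebra ℂ K →ₐ[ℂ] MonoidAlgebra ℂ (Wreath n K) :=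
  MonoidAlgebra.mapDomainAlgHom ℂ ℂ (iota (n := n) (K := K) i)

lemma phi_of (i : Fin n) (x : K) :
    phi i (MonoidAlgebra.of ℂ K x) = OFW (iota i x) := by
  simp [phi, MonoidAlgebra.of_apply, MonoidAlgebra.mapDomainAlgHom, Finsupp.mapDomain_single]

lemma phi_avg (i : Fin n) : phi i (avgIdem K L) = ei L i := by
  unfold avgIdem ei
  rw [map_smul, map_sum]
  congr 1
  exact Finset.sum_congr rfl fun h _ => phi_of i (h : K)

lemma hecke_head (hGP : IsGelfandPair K L) (i : Fin n) (x y : K) :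
    ei L i * OFW (iota i x) * ei L i * OFW (iota i y) * ei L i
      = ei L i * OFW (iota i y) * ei L i * OFW (iota i x) * ei L i := by
  have h := congrArg (phi i) (heckeK L hGP x y)
  simpa only [map_mul, phi_avg, phi_of] using h

lemma hecke_z (hGP : IsGelfandPair K L) (i : Fin n) (x y : K)
    (z : MonoidAlgebra ℂ (Wreath n K)) :
    ei L i * (OFW (iota i x) * (ei L i * (OFW (iota i y) * (ei L i * z))))
      = ei L i * (OFW (iota i y) * (ei L i * (OFW (iota i x) * (ei L i * z)))) := by
  have h := congrArg (· * z) (hecke_head L hGP i x y)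
  simpa only [mul_assoc] using h

lemma decomp (u v : Fin n → K) (i : Fin n) :
    EW * (OFW (inl u) * (e0 L * (OFW (inl v) * EW)))
      = EW * (OFW (inl (update u i 1)) * (OFW (iota i (u i)) * (ei L i *
          (OFW (iota i (v i)) * (di L i * (OFW (inl (update v i 1)) * EW)))))) := by
  conv_lhs =>
    rw [show (inl u : Wreath n K) = inl (update u i 1) * iota i (u i) from inl_decompose_left u i]
    rw [show (inl v : Wreath n K) = iota i (v i) * inl (update v i 1) from inl_decompose_right v i]
    rw [← ei_mul_di L i]
  rw [map_mul, map_mul]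
  simp only [mul_assoc]
  rw [comm_z (di_comm_iota L i (v i))]

lemma norm_form (i : Fin n) (x y : K) {u₀ v₀ : Fin n → K} (hu : u₀ i = 1) (hv : v₀ i = 1) :
    EW * (OFW (inl u₀) * (OFW (iota i x) * (ei L i *
        (OFW (iota i y) * (di L i * (OFW (inl v₀) * EW))))))
      = EW * (OFW (inl u₀) * (ei L i * (OFW (iota i x) * (ei L i *
          (OFW (iota i y) * (ei L i * (di L i * (OFW (inl v₀) * EW)))))))) := by
  conv_rhs =>
    rw [comm_z (ei_comm_di L i)]
    rw [comm_z (ei_comm_inl L i hv)]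
    rw [ei_mul_E L i]
    rw [← comm_z (ei_comm_inl L i hu)]
    rw [E_ei_z L i]

lemma swap_coord (hGP : IsGelfandPair K L) (u v : Fin n → K) (i : Fin n) :
    EW * (OFW (inl u) * (e0 L * (OFW (inl v) * EW)))
      = EW * (OFW (inl (update u i (v i))) * (e0 L * (OFW (inl (update v i (u i))) * EW))) := by
  rw [decomp L u v i, decomp L (update u i (v i)) (update v i (u i)) i]
  simp only [update_idem, update_self]
  rw [norm_form L i (u i) (v i) (update_self i 1 u) (update_self i 1 v),
    norm_form L i (v i) (u i) (update_self i 1 u) (update_self i 1 v)]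
  exact congrArg (fun t => EW * (OFW (inl (update u i 1)) * t))
    (hecke_z L hGP i (u i) (v i) _)

lemma swap_all (hGP : IsGelfandPair K L) (u v : Fin n → K) :
    EW * (OFW (inl u) * (e0 L * (OFW (inl v) * EW)))
      = EW * (OFW (inl v) * (e0 L * (OFW (inl u) * EW))) := by
  have main : ∀ S : Finset (Fin n),
      EW * (OFW (inl u) * (e0 L * (OFW (inl v) * EW)))
        = EW * (OFW (inl (S.piecewise v u)) * (e0 L * (OFW (inl (S.piecewise u v)) * EW))) := by
    intro S
    induction S using Finset.induction_on with
    | empty => simp [Finset.piecewise_empty]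
    | @insert i S hi ih =>
        rw [ih, Finset.piecewise_insert, Finset.piecewise_insert]
        have hp : S.piecewise v u i = u i := Finset.piecewise_eq_of_notMem _ _ _ hi
        have hq : S.piecewise u v i = v i := Finset.piecewise_eq_of_notMem _ _ _ hi
        rw [show update (S.piecewise v u) i (v i)
              = update (S.piecewise v u) i ((S.piecewise u v) i) from by rw [hq]]
        rw [show update (S.piecewise u v) i (u i)
              = update (S.piecewise u v) i ((S.piecewise v u) i) from by rw [hp]]
        exact swap_coord L hGP _ _ i
  have h := main Finset.univ
  simpa [Finset.piecewise_univ] using h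

lemma expand (a b : Fin n → K) :
    EW * (OFW (inl a) * (EW * (OFW (inl b) * EW)))
      = (Fintype.card (Equiv.Perm (Fin n)) : ℂ)⁻¹ •
          ∑ σ : Equiv.Perm (Fin n),
            EW * (OFW (inl a) * (e0 L * (OFW (inl (permAut n K σ b)) * EW))) := by
  conv_lhs => enter [2, 2, 1]; rw [E_eq L]
  simp only [mul_assoc]
  have hff : ffp * (OFW (inl b) * EW)
      = (Fintype.card (Equiv.Perm (Fin n)) : ℂ)⁻¹ •
          ∑ σ : Equiv.Perm (Fin n), OFW (inl (permAut n K σ b)) * EW := by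
    unfold ffp
    rw [smul_mul_assoc, Finset.sum_mul]
    congr 1
    refine Finset.sum_congr rfl fun σ _ => ?_
    rw [← mul_assoc, ← map_mul, inr_mul_inl, map_mul, mul_assoc,
      of_mul_avgIdem _ (inr_mem L σ)]
  rw [hff]
  simp only [mul_smul_comm, Finset.mul_sum, mul_assoc]

lemma conjStep (a b : Fin n → K) (σ : Equiv.Perm (Fin n)) :
    EW * (OFW (inl (permAut n K σ b)) * (e0 L * (OFW (inl a) * EW)))
      = EW * (OFW (inl b) * (e0 L * (OFW (inl (permAut n K σ⁻¹ a)) * EW))) := by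
  rw [show (inl (permAut n K σ b) : Wreath n K) = inr σ * inl b * inr σ⁻¹ from inl_aut σ b]
  rw [map_mul, map_mul]
  simp only [mul_assoc]
  rw [E_absorb_z L (inr_mem L σ)]
  rw [comm_z ((e0_comm_inr L σ⁻¹))]
  have hconj : OFW (inr σ⁻¹) * OFW (inl a)
      = OFW (inl (permAut n K σ⁻¹ a)) * OFW (inr σ⁻¹) := by
    rw [← map_mul, inr_mul_inl, map_mul]
  rw [shuffle hconj]
  rw [of_mul_avgIdem _ (inr_mem L σ⁻¹)]

end Alg
end WGPaux


/-- If `(K, L)` is a Gelfand pair, then `(K ≀ S_n, L ≀ S_n)` is also a Gelfand pair. -/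
theorem wreath_gelfand_pair
    (K : Type) [Group K] [Fintype K] (L : Subgroup K)
    (hGP : IsGelfandPair K L) (n : ℕ) :
    IsGelfandPair (Wreath n K) (wreathSubgroup n K L) := by
  classical
  apply isGelfandPair_of_of
  intro g g'
  set a := g.left with ha
  set b := g'.left with hb
  have habs : ∀ σ : Equiv.Perm (Fin n),
      MonoidAlgebra.of ℂ (Wreath n K) (SemidirectProduct.inr σ)
        * avgIdem (Wreath n K) (wreathSubgroup n K L)
        = avgIdem (Wreath n K) (wreathSubgroup n K L) :=
    fun σ => of_mul_avgIdem _ (WGPaux.inr_mem L σ)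
  have habs2 : ∀ (σ : Equiv.Perm (Fin n)) (z : MonoidAlgebra ℂ (Wreath n K)),
      MonoidAlgebra.of ℂ (Wreath n K) (SemidirectProduct.inr σ)
          * (avgIdem (Wreath n K) (wreathSubgroup n K L) * z)
        = avgIdem (Wreath n K) (wreathSubgroup n K L) * z :=
    fun σ z => by rw [← mul_assoc, habs σ]
  rw [show (g : Wreath n K) = SemidirectProduct.inl g.left * SemidirectProduct.inr g.right from
    (SemidirectProduct.inl_left_mul_inr_right g).symm]
  rw [show (g' : Wreath n K) = SemidirectProduct.inl g'.left * SemidirectProduct.inr g'.right from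
    (SemidirectProduct.inl_left_mul_inr_right g').symm]
  rw [map_mul, map_mul]
  simp only [mul_assoc]
  rw [habs2 g.right, habs g'.right, habs2 g'.right, habs g.right]
  rw [WGPaux.expand L a b, WGPaux.expand L b a]
  refine congrArg (((Fintype.card (Equiv.Perm (Fin n)) : ℂ)⁻¹) • ·) ?_
  apply Fintype.sum_equiv (Equiv.inv (Equiv.Perm (Fin n)))
  intro σ
  rw [WGPaux.swap_all L hGP a (permAut n K σ b), WGPaux.conjStep L a b σ]
  rfl
end

section
/- Let (K,L) be a Gelfand pair with zonal spherical functions ω_0,...,ω_{s-1} (ω_0 = 1). For the Gelfand pair (K ≀ S_n, L ≀ S_n), the zonal spherical functions Ω_k, indexed by k = (k_0,...,k_{s-1}) with k_0+⋯+k_{s-1}=n, satisfy the generating identity: for x = (x_1,...,x_n;σ) ∈ K ≀ S_n, ∏_{i=1}^n (∑_{j=0}^{s-1} ω_j(x_i) t_j) = ∑_{k} (n choose k_0,...,k_{s-1}) Ω_k(x) t_0^{k_0}⋯t_{s-1}^{k_{s-1}} as polynomials in commuting variables t_0,...,t_{s-1}. -/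
open scoped BigOperators

attribute [local instance] Classical.propDecidable

/-- `ω` is a zonal spherical function of the pair `(K, L)`:
normalized, bi-`L`-invariant, and satisfying the spherical functional equation. -/
def IsZSF (K : Type) [Group K] [Fintype K] (L : Subgroup K) (ω : K → ℂ) : Prop :=
  ω 1 = 1 ∧
    (∀ g : K, ∀ h ∈ L, ∀ h' ∈ L, ω (h * g * h') = ω g) ∧
    ∀ x y : K, (Fintype.card L : ℂ)⁻¹ * ∑ h : L, ω (x * (h : K) * y) = ω x * ω y

/-- the double coset `L x₀ L` as a set -/
def dcoset (K : Type) [Group K] (L : Subgroup K) (x₀ : K) : Set K :=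
  {g : K | ∃ a ∈ L, ∃ b ∈ L, g = a * x₀ * b}

/-- one-step transition probability of the interacting urn model on `(K ⧸ L)^n` -/
noncomputable def step (K : Type) [Group K] [Fintype K] (L : Subgroup K) (x₀ : K)
    (n m : ℕ) (p : ℝ) (x y : Fin n → K ⧸ L) : ℝ :=
  if x = y then 1 - m * p
  else if ∃ j : Fin n, (∀ i : Fin n, i ≠ j → x i = y i) ∧
      (x j).out⁻¹ * (y j).out ∈ dcoset K L x₀ then p / n
  else 0

/-- the transition matrix `P_{(K,L;n)}` (real version) -/
noncomputable def PmatR (K : Type) [Group K] [Fintype K] (L : Subgroup K) (x₀ : K)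
    (n m : ℕ) (p : ℝ) : Matrix (Fin n → K ⧸ L) (Fin n → K ⧸ L) ℝ :=
  Matrix.of fun x y => step K L x₀ n m p x y

/-- the transition matrix `P_{(K,L;n)}` (complex version) -/
noncomputable def PmatC (K : Type) [Group K] [Fintype K] (L : Subgroup K) (x₀ : K)
    (n m : ℕ) (p : ℝ) : Matrix (Fin n → K ⧸ L) (Fin n → K ⧸ L) ℂ :=
  Matrix.of fun x y => (step K L x₀ n m p x y : ℂ)

/-- the initial state `ē = (L, …, L)` -/
def eQ (K : Type) [Group K] (L : Subgroup K) (n : ℕ) : Fin n → K ⧸ L :=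
  fun _ => ((1 : K) : K ⧸ L)

/-- The generating identity defining the multivariate Krawtchouk polynomials `Ω_k`:
`∏_{i=1}^n (∑_j ω_j(x_i) t_j) = ∑_{k ∈ X(s,n)} (n choose k) Ω_k(x) t^k`,
stated coefficientwise. -/
def GenId (K : Type) [Group K] (s n : ℕ) (ω : Fin s → K → ℂ)
    (Ω : (Fin s → ℕ) → (Fin n → K) → ℂ) : Prop :=
  ∀ (x : Fin n → K) (k : Fin s → ℕ), (∑ i, k i = n) →
    MvPolynomial.coeff (Finsupp.equivFunOnFinite.symm k)
        (∏ i : Fin n, ∑ j : Fin s, MvPolynomial.C (ω j (x i)) * MvPolynomial.X j) =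
      (Nat.multinomial Finset.univ k : ℂ) * Ω k x



/-! ### Auxiliary combinatorial lemmas -/

namespace WreathZSF
open Finset Nat

variable {n s : ℕ}

/-- The size of the fiber of `f` over `j`. -/
def fib (f : Fin n → Fin s) (j : Fin s) : ℕ := #(Finset.univ.filter fun i => f i = j)

/-- Functions `Fin n → Fin s` with prescribed fiber sizes `k`. -/
def Fk (k : Fin s → ℕ) : Finset (Fin n → Fin s) :=
  Finset.univ.filter fun f => ∀ j, fib f j = k j

lemma mem_Fk {k : Fin s → ℕ} {f : Fin n → Fin s} : f ∈ Fk k ↔ ∀ j, fib f j = k j := by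
  simp [Fk]

lemma fib_comp (f : Fin n → Fin s) (σ : Equiv.Perm (Fin n)) (j : Fin s) :
    fib (f ∘ σ) j = fib f j := by
  unfold fib
  refine Finset.card_bij' (fun i _ => σ i) (fun i _ => σ.symm i) ?_ ?_ ?_ ?_ <;> simp

lemma comp_mem_Fk {k : Fin s → ℕ} {f : Fin n → Fin s} (σ : Equiv.Perm (Fin n)) :
    f ∘ σ ∈ Fk k ↔ f ∈ Fk k := by
  simp [mem_Fk, fib_comp]

lemma prod_monomial {ι : Type*} (t : Finset ι) (d : ι → (Fin s →₀ ℕ)) (a : ι → ℂ) :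
    (∏ i ∈ t, (MvPolynomial.monomial (d i) (a i))) =
      MvPolynomial.monomial (∑ i ∈ t, d i) (∏ i ∈ t, a i) := by
  classical
  induction t using Finset.cons_induction with
  | empty => simp
  | cons i t hi ih =>
      rw [Finset.prod_cons, Finset.sum_cons, Finset.prod_cons, ih,
        MvPolynomial.monomial_mul]

lemma coeff_prod_sum (c : Fin n → Fin s → ℂ) (k : Fin s → ℕ) :
    MvPolynomial.coeff (Finsupp.equivFunOnFinite.symm k)
        (∏ i : Fin n, ∑ j : Fin s, MvPolynomial.C (c i j) * MvPolynomial.X j) =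
      ∑ f ∈ Fk k, ∏ i, c i (f i) := by
  classical
  have hCX : ∀ (a : ℂ) (j : Fin s), MvPolynomial.C a * MvPolynomial.X j
      = MvPolynomial.monomial (Finsupp.single j 1) a := by
    intro a j
    rw [← MvPolynomial.C_mul_X_pow_eq_monomial, pow_one]
  simp_rw [hCX]
  rw [Finset.prod_univ_sum, Fintype.piFinset_univ]
  simp_rw [prod_monomial]
  rw [MvPolynomial.coeff_sum]
  simp_rw [MvPolynomial.coeff_monomial]
  have hcond : ∀ f : Fin n → Fin s,
      ((∑ i, Finsupp.single (f i) 1) = Finsupp.equivFunOnFinite.symm k) ↔ f ∈ Fk k := by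
    intro f
    rw [Finsupp.ext_iff, mem_Fk]
    apply forall_congr'
    intro j
    have h1 : (∑ i, Finsupp.single (f i) (1 : ℕ)) j = fib f j := by
      rw [Finset.sum_apply', fib, Finset.card_filter]
      refine Finset.sum_congr rfl fun i _ => ?_
      rw [Finsupp.single_apply]
    have h2 : (Finsupp.equivFunOnFinite.symm k) j = k j := rfl
    rw [h1, h2]
  calc (∑ f : Fin n → Fin s,
        if (∑ i, Finsupp.single (f i) 1) = Finsupp.equivFunOnFinite.symm k
        then ∏ i, c i (f i) else 0)
      = ∑ f : Fin n → Fin s, if f ∈ Fk k then ∏ i, c i (f i) else 0 :=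
        Finset.sum_congr rfl fun f _ => if_congr (hcond f) rfl rfl
    _ = ∑ f ∈ Fk k, ∏ i, c i (f i) := by
        rw [Finset.sum_ite_mem, Finset.univ_inter]

lemma card_perm_fiber {f g : Fin n → Fin s} (h : ∀ j : Fin s, fib f j = fib g j) :
    #(Finset.univ.filter fun π : Equiv.Perm (Fin n) => f ∘ ⇑π = g) = ∏ j, (fib g j)! := by
  classical
  rw [← Fintype.card_subtype]
  have hfib : ∀ j, Fintype.card {i : Fin n // g i = j} = Fintype.card {i : Fin n // f i = j} := by
    intro j
    rw [Fintype.card_subtype, Fintype.card_subtype]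
    exact (h j).symm
  set Φ : (∀ j : Fin s, {i : Fin n // g i = j} ≃ {i : Fin n // f i = j}) →
      {π : Equiv.Perm (Fin n) // f ∘ ⇑π = g} :=
    fun e => ⟨Equiv.ofFiberEquiv e, funext fun i => Equiv.ofFiberEquiv_map e i⟩ with hΦ
  have hbij : Function.Bijective Φ := by
    constructor
    · intro e e' hee
      have happ : ∀ a, (Equiv.ofFiberEquiv e) a = (Equiv.ofFiberEquiv e') a := by
        intro a
        have h2 := congrArg Subtype.val hee
        exact congrFun (congrArg (fun (π : Equiv.Perm (Fin n)) => ⇑π) h2) a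
      funext j
      apply Equiv.ext
      rintro ⟨i, hi⟩
      apply Subtype.ext
      subst hi
      calc ((e (g i)) ⟨i, rfl⟩).val = (Equiv.ofFiberEquiv e) i := rfl
        _ = (Equiv.ofFiberEquiv e') i := happ i
        _ = ((e' (g i)) ⟨i, rfl⟩).val := rfl
    · rintro ⟨π, hπ⟩
      have hπ' : ∀ i, f (π i) = g i := fun i => congrFun hπ i
      refine ⟨fun j =>
        { toFun := fun p => ⟨π p.1, by rw [hπ' p.1, p.2]⟩
          invFun := fun q => ⟨π.symm q.1, by
            have h2 := hπ' (π.symm q.1)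
            rw [Equiv.apply_symm_apply] at h2
            rw [← h2, q.2]⟩
          left_inv := fun p => Subtype.ext (π.symm_apply_apply p.1)
          right_inv := fun q => Subtype.ext (π.apply_symm_apply q.1) }, ?_⟩
      apply Subtype.ext
      apply Equiv.ext
      intro i
      rfl
  rw [← Fintype.card_of_bijective hbij, Fintype.card_pi]
  refine Finset.prod_congr rfl fun j _ => ?_
  rw [Fintype.card_equiv (Fintype.equivOfCardEq (hfib j)), Fintype.card_subtype]
  rfl

lemma exists_mem_Fk {k : Fin s → ℕ} (hk : ∑ j, k j = n) : ∃ f : Fin n → Fin s, f ∈ Fk k := by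
  classical
  have hcard : Fintype.card (Σ j : Fin s, Fin (k j)) = Fintype.card (Fin n) := by
    simp [Fintype.card_sigma, hk]
  set e := Fintype.equivOfCardEq hcard with he
  refine ⟨fun i => (e.symm i).1, ?_⟩
  rw [mem_Fk]
  intro j
  have h1 : fib (fun i => (e.symm i).1) j = Fintype.card {i : Fin n // (e.symm i).1 = j} :=
    (Fintype.card_subtype _).symm
  have e1 : {i : Fin n // (e.symm i).1 = j} ≃ {p : Σ j' : Fin s, Fin (k j') // p.1 = j} :=
    Equiv.subtypeEquiv e.symm (fun i => Iff.rfl)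
  have e2 : {p : Σ j' : Fin s, Fin (k j') // p.1 = j} ≃ Fin (k j) :=
    { toFun := fun p => Fin.cast (congrArg k p.2) p.1.2
      invFun := fun b => ⟨⟨j, b⟩, rfl⟩
      left_inv := by
        rintro ⟨⟨j', b⟩, hj⟩
        have hj' : j' = j := hj
        subst hj'
        rfl
      right_inv := fun b => rfl }
  rw [h1, Fintype.card_congr (e1.trans e2), Fintype.card_fin]

lemma card_Fk_eq {k : Fin s → ℕ} (hk : ∑ j, k j = n) :
    #(Fk (n := n) k) = Nat.multinomial Finset.univ k := by
  classical
  obtain ⟨f₀, hf₀⟩ := exists_mem_Fk hk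
  have h1 : ((Finset.univ : Finset (Equiv.Perm (Fin n)))).card =
      ∑ g ∈ Fk k, #(Finset.univ.filter fun π : Equiv.Perm (Fin n) => f₀ ∘ ⇑π = g) :=
    Finset.card_eq_sum_card_fiberwise (fun π _ => (comp_mem_Fk π).mpr hf₀)
  rw [Finset.card_univ, Fintype.card_perm, Fintype.card_fin] at h1
  have h2 : ∀ g ∈ Fk (n := n) k,
      #(Finset.univ.filter fun π : Equiv.Perm (Fin n) => f₀ ∘ ⇑π = g) = ∏ j, (k j)! := by
    intro g hg
    rw [card_perm_fiber (fun j => by rw [(mem_Fk.mp hf₀) j, (mem_Fk.mp hg) j])]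
    exact Finset.prod_congr rfl fun j _ => by rw [(mem_Fk.mp hg) j]
  rw [Finset.sum_congr rfl h2, Finset.sum_const, smul_eq_mul] at h1
  have h3 := Nat.multinomial_spec Finset.univ k
  rw [hk] at h3
  have hpos : 0 < ∏ j, (k j)! := Finset.prod_pos fun j _ => Nat.factorial_pos _
  refine Nat.eq_of_mul_eq_mul_right hpos ?_
  rw [← h1, mul_comm]
  exact h3.symm

end WreathZSF

/-! ### Auxiliary lemmas on the wreath product -/

section WreathAux
variable {n : ℕ} {K : Type} [Group K] [Fintype K] (L : Subgroup K)

omit [Fintype K] in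
lemma permAut_apply (σ : Equiv.Perm (Fin n)) (f : Fin n → K) (i : Fin n) :
    (permAut n K σ f) i = f (σ⁻¹ i) := rfl

omit [Fintype K] in
lemma triple_left (x w y : Wreath n K) (i : Fin n) :
    (x * w * y).left i =
      x.left i * w.left (x.right⁻¹ i) * y.left (w.right⁻¹ (x.right⁻¹ i)) := by
  have h1 : ((x.right * w.right)⁻¹ : Equiv.Perm (Fin n)) i = w.right⁻¹ (x.right⁻¹ i) := by
    rw [mul_inv_rev]; rfl
  simp only [SemidirectProduct.mul_left, SemidirectProduct.mul_right, Pi.mul_apply,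
    permAut_apply, h1]

/-- `L ≀ Sₙ` is in bijection with `Lⁿ × Sₙ`. -/
def wreathEquiv : ((Fin n → L) × Equiv.Perm (Fin n)) ≃ ↥(wreathSubgroup n K L) where
  toFun p := ⟨⟨fun i => (p.1 i : K), p.2⟩, fun i => (p.1 i).2⟩
  invFun w := (fun i => ⟨(w : Wreath n K).left i, w.2 i⟩, (w : Wreath n K).right)
  left_inv _ := rfl
  right_inv _ := rfl

lemma card_wreathSubgroup :
    Fintype.card ↥(wreathSubgroup n K L) = Fintype.card L ^ n * n.factorial := by
  rw [← Fintype.card_congr (wreathEquiv L)]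
  simp [Fintype.card_fun, Fintype.card_perm]

end WreathAux


/-- For a Gelfand pair `(K, L)`, the zonal spherical functions `Ω_k` of the wreath-product
Gelfand pair `(K ≀ S_n, L ≀ S_n)`, indexed by `k ∈ X(s,n)`, are given by the generating
identity `∏_i (∑_j ω_j(x_i) t_j) = ∑_k (n choose k) Ω_k(x) t^k`. -/
theorem wreath_zsf_generating_identity
    (K : Type) [Group K] [Fintype K] (L : Subgroup K)
    (hGP : IsGelfandPair K L)
    (s : ℕ) [NeZero s] (hs : 2 ≤ s)
    (ω : Fin s → K → ℂ)
    (hzsf : ∀ i, IsZSF K L (ω i))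
    (hω0 : ∀ g : K, ω 0 g = 1)
    (hinj : Function.Injective ω)
    (hcomplete : s = Nat.card (DoubleCoset.Quotient (L : Set K) (L : Set K)))
    (n : ℕ) (hn : 0 < n) :
    ∃ Ω : (Fin s → ℕ) → (Fin n → K) → ℂ,
      GenId K s n ω Ω ∧
        ∀ k : Fin s → ℕ, (∑ i, k i = n) →
          IsZSF (Wreath n K) (wreathSubgroup n K L) (fun w => Ω k w.left) := by
  classical
  have hNne : ∀ k : Fin s → ℕ, ((Nat.multinomial Finset.univ k : ℂ)) ≠ 0 := fun k =>
    Nat.cast_ne_zero.mpr (Nat.multinomial_pos _ _).ne'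
  refine ⟨fun k x => (Nat.multinomial Finset.univ k : ℂ)⁻¹ *
      ∑ f ∈ WreathZSF.Fk k, ∏ i, ω (f i) (x i), ?_, ?_⟩
  · intro x k hk
    rw [WreathZSF.coeff_prod_sum (fun i j => ω j (x i)) k, ← mul_assoc,
      mul_inv_cancel₀ (hNne k), one_mul]
  · intro k hk
    have hcL : ((Fintype.card L : ℂ)) ≠ 0 := Nat.cast_ne_zero.mpr Fintype.card_pos.ne'
    refine ⟨?_, ?_, ?_⟩
    · -- normalization at the identity
      show (Nat.multinomial Finset.univ k : ℂ)⁻¹ *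
          ∑ f ∈ WreathZSF.Fk k, ∏ i, ω (f i) ((1 : Wreath n K).left i) = 1
      have h1 : ∀ f ∈ WreathZSF.Fk (n := n) k,
          (∏ i, ω (f i) ((1 : Wreath n K).left i)) = 1 := by
        intro f _
        refine Finset.prod_eq_one fun i _ => ?_
        have h2 : (1 : Wreath n K).left i = 1 := by
          rw [SemidirectProduct.one_left]; rfl
        rw [h2]
        exact (hzsf (f i)).1
      rw [Finset.sum_congr rfl h1, Finset.sum_const, nsmul_eq_mul, mul_one,
        WreathZSF.card_Fk_eq hk, inv_mul_cancel₀ (hNne k)]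
    · -- bi-invariance
      intro g h hh hh' hhh'
      show (Nat.multinomial Finset.univ k : ℂ)⁻¹ *
            ∑ f ∈ WreathZSF.Fk k, ∏ i, ω (f i) ((h * g * hh').left i)
          = (Nat.multinomial Finset.univ k : ℂ)⁻¹ *
            ∑ f ∈ WreathZSF.Fk k, ∏ i, ω (f i) (g.left i)
      congr 1
      have hhL : ∀ i, h.left i ∈ L := hh
      have hh'L : ∀ i, hh'.left i ∈ L := hhh'
      have step1 : ∀ f : Fin n → Fin s,
          (∏ i, ω (f i) ((h * g * hh').left i)) = ∏ i, ω (f (h.right i)) (g.left i) := by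
        intro f
        have e1 : (∏ i, ω (f i) ((h * g * hh').left i))
            = ∏ i, ω (f i) (g.left (h.right⁻¹ i)) := by
          refine Finset.prod_congr rfl fun i _ => ?_
          rw [triple_left]
          exact (hzsf (f i)).2.1 _ _ (hhL i) _ (hh'L _)
        have e2 : (∏ i, ω (f (h.right i)) (g.left i))
            = ∏ i, ω (f i) (g.left (h.right⁻¹ i)) := by
          refine Fintype.prod_equiv h.right _ _ fun i => ?_
          simp
        rw [e1, ← e2]
      rw [Finset.sum_congr rfl fun f _ => step1 f]
      refine Finset.sum_nbij' (i := fun f => f ∘ ⇑h.right) (j := fun f => f ∘ ⇑(h.right⁻¹))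
        ?_ ?_ ?_ ?_ ?_
      · intro f hf; exact (WreathZSF.comp_mem_Fk _).mpr hf
      · intro f hf; exact (WreathZSF.comp_mem_Fk _).mpr hf
      · intro f _; funext i; simp
      · intro f _; funext i; simp
      · intro f _; rfl
    · -- functional equation
      intro x y
      show (Fintype.card ↥(wreathSubgroup n K L) : ℂ)⁻¹ *
            ∑ h : ↥(wreathSubgroup n K L), ((Nat.multinomial Finset.univ k : ℂ)⁻¹ *
              ∑ f ∈ WreathZSF.Fk k, ∏ i, ω (f i) ((x * h.val * y).left i))
          = ((Nat.multinomial Finset.univ k : ℂ)⁻¹ *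
              ∑ f ∈ WreathZSF.Fk k, ∏ i, ω (f i) (x.left i)) *
            ((Nat.multinomial Finset.univ k : ℂ)⁻¹ *
              ∑ f ∈ WreathZSF.Fk k, ∏ i, ω (f i) (y.left i))
      have hinner : ∀ (π : Equiv.Perm (Fin n)) (f : Fin n → Fin s),
          (∑ a : Fin n → ↥L, ∏ i, ω (f i) (x.left i * ↑(a i) * y.left (π⁻¹ i)))
            = (Fintype.card L : ℂ) ^ n *
              ((∏ i, ω (f i) (x.left i)) * ∏ i, ω (f i) (y.left (π⁻¹ i))) := by
        intro π f
        have hps := Finset.prod_univ_sum (fun _ : Fin n => (Finset.univ : Finset ↥L))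
          (fun i c => ω (f i) (x.left i * ↑c * y.left (π⁻¹ i)))
        rw [Fintype.piFinset_univ] at hps
        rw [← hps]
        have h5 : ∀ i : Fin n, (∑ c : ↥L, ω (f i) (x.left i * ↑c * y.left (π⁻¹ i)))
            = (Fintype.card L : ℂ) * (ω (f i) (x.left i) * ω (f i) (y.left (π⁻¹ i))) := by
          intro i
          rw [← (hzsf (f i)).2.2 (x.left i) (y.left (π⁻¹ i)), ← mul_assoc,
            mul_inv_cancel₀ hcL, one_mul]
        rw [Finset.prod_congr rfl fun i _ => h5 i, Finset.prod_mul_distrib,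
          Finset.prod_const, Finset.card_univ, Fintype.card_fin, Finset.prod_mul_distrib]
      have hyrev : ∀ (π : Equiv.Perm (Fin n)) (f : Fin n → Fin s),
          (∏ i, ω (f i) (y.left (π⁻¹ i))) = ∏ i, ω (f (π i)) (y.left i) := by
        intro π f
        exact (Fintype.prod_equiv π (fun i => ω (f (π i)) (y.left i))
          (fun i => ω (f i) (y.left (π⁻¹ i))) (fun i => by simp)).symm
      have hTsum : ∀ f ∈ WreathZSF.Fk (n := n) k,
          (∑ π : Equiv.Perm (Fin n), ∏ i, ω (f (π i)) (y.left i))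
            = ((∏ j, (k j).factorial : ℕ) : ℂ) *
              ∑ g ∈ WreathZSF.Fk k, ∏ i, ω (g i) (y.left i) := by
        intro f hf
        have hmaps : ∀ π : Equiv.Perm (Fin n),
            π ∈ (Finset.univ : Finset (Equiv.Perm (Fin n))) →
            f ∘ ⇑π ∈ WreathZSF.Fk (n := n) k := fun π _ => (WreathZSF.comp_mem_Fk π).mpr hf
        rw [← Finset.sum_fiberwise_of_maps_to hmaps (fun π => ∏ i, ω (f (π i)) (y.left i))]
        rw [Finset.mul_sum]
        refine Finset.sum_congr rfl fun g hg => ?_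
        have hfg : ∀ π ∈ Finset.univ.filter fun π : Equiv.Perm (Fin n) => f ∘ ⇑π = g,
            (∏ i, ω (f (π i)) (y.left i)) = ∏ i, ω (g i) (y.left i) := by
          intro π hπ
          have h6 := (Finset.mem_filter.mp hπ).2
          exact Finset.prod_congr rfl fun i _ => by rw [← congrFun h6 i]; rfl
        rw [Finset.sum_congr rfl hfg, Finset.sum_const,
          WreathZSF.card_perm_fiber (fun j => by
            rw [(WreathZSF.mem_Fk.mp hf) j, (WreathZSF.mem_Fk.mp hg) j]), nsmul_eq_mul]
        have h7 : (∏ j, (WreathZSF.fib g j).factorial) = ∏ j, (k j).factorial :=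
          Finset.prod_congr rfl fun j _ => by rw [(WreathZSF.mem_Fk.mp hg) j]
        rw [h7]
      have hbija : Function.Bijective (fun a : Fin n → ↥L => a ∘ ⇑(x.right⁻¹)) := by
        constructor
        · intro a a' haa
          funext i
          have h8 := congrFun haa (x.right i)
          simpa using h8
        · intro b
          refine ⟨b ∘ ⇑x.right, ?_⟩
          funext i
          simp
      have key : (∑ h : ↥(wreathSubgroup n K L),
            ∑ f ∈ WreathZSF.Fk k, ∏ i, ω (f i) ((x * h.val * y).left i))
          = (Fintype.card L : ℂ) ^ n * (((∏ j, (k j).factorial : ℕ) : ℂ) *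
              ((∑ f ∈ WreathZSF.Fk k, ∏ i, ω (f i) (x.left i)) *
               (∑ f ∈ WreathZSF.Fk k, ∏ i, ω (f i) (y.left i)))) := by
        calc (∑ h : ↥(wreathSubgroup n K L),
                ∑ f ∈ WreathZSF.Fk k, ∏ i, ω (f i) ((x * h.val * y).left i))
            = ∑ p : (Fin n → ↥L) × Equiv.Perm (Fin n), ∑ f ∈ WreathZSF.Fk k,
                ∏ i, ω (f i) ((x * (wreathEquiv L p).val * y).left i) :=
              (Fintype.sum_equiv (wreathEquiv L) _ _ (fun p => rfl)).symm
          _ = ∑ a : Fin n → ↥L, ∑ τ : Equiv.Perm (Fin n), ∑ f ∈ WreathZSF.Fk k,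
                ∏ i, ω (f i) ((x * (wreathEquiv L (a, τ)).val * y).left i) :=
              Fintype.sum_prod_type _
          _ = ∑ a : Fin n → ↥L, ∑ τ : Equiv.Perm (Fin n), ∑ f ∈ WreathZSF.Fk k,
                ∏ i, ω (f i) (x.left i * ↑(a (x.right⁻¹ i)) * y.left (τ⁻¹ (x.right⁻¹ i))) :=
              Finset.sum_congr rfl fun a _ => Finset.sum_congr rfl fun τ _ =>
                Finset.sum_congr rfl fun f _ => Finset.prod_congr rfl fun i _ => by
                  rw [triple_left]; rfl
          _ = ∑ a : Fin n → ↥L, ∑ τ : Equiv.Perm (Fin n), ∑ f ∈ WreathZSF.Fk k,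
                ∏ i, ω (f i) (x.left i * ↑(a i) * y.left (τ⁻¹ (x.right⁻¹ i))) :=
              Fintype.sum_bijective _ hbija _ _ (fun a => rfl)
          _ = ∑ τ : Equiv.Perm (Fin n), ∑ a : Fin n → ↥L, ∑ f ∈ WreathZSF.Fk k,
                ∏ i, ω (f i) (x.left i * ↑(a i) * y.left (τ⁻¹ (x.right⁻¹ i))) :=
              Finset.sum_comm
          _ = ∑ π : Equiv.Perm (Fin n), ∑ a : Fin n → ↥L, ∑ f ∈ WreathZSF.Fk k,
                ∏ i, ω (f i) (x.left i * ↑(a i) * y.left (π⁻¹ i)) := by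
              refine Fintype.sum_bijective (fun τ => x.right * τ)
                (Group.mulLeft_bijective x.right) _ _ (fun τ => ?_)
              have hττ : ∀ i : Fin n, ((x.right * τ)⁻¹ : Equiv.Perm (Fin n)) i
                  = τ⁻¹ (x.right⁻¹ i) := fun i => by rw [mul_inv_rev]; rfl
              exact Finset.sum_congr rfl fun a _ => Finset.sum_congr rfl fun f _ =>
                Finset.prod_congr rfl fun i _ => by rw [hττ i]
          _ = ∑ π : Equiv.Perm (Fin n), ∑ f ∈ WreathZSF.Fk k, ∑ a : Fin n → ↥L,
                ∏ i, ω (f i) (x.left i * ↑(a i) * y.left (π⁻¹ i)) :=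
              Finset.sum_congr rfl fun π _ => Finset.sum_comm
          _ = ∑ π : Equiv.Perm (Fin n), ∑ f ∈ WreathZSF.Fk k,
                (Fintype.card L : ℂ) ^ n *
                  ((∏ i, ω (f i) (x.left i)) * ∏ i, ω (f (π i)) (y.left i)) :=
              Finset.sum_congr rfl fun π _ => Finset.sum_congr rfl fun f _ => by
                rw [hinner π f, hyrev π f]
          _ = ∑ f ∈ WreathZSF.Fk k, ∑ π : Equiv.Perm (Fin n),
                (Fintype.card L : ℂ) ^ n *
                  ((∏ i, ω (f i) (x.left i)) * ∏ i, ω (f (π i)) (y.left i)) :=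
              Finset.sum_comm
          _ = ∑ f ∈ WreathZSF.Fk k, (Fintype.card L : ℂ) ^ n *
                ((∏ i, ω (f i) (x.left i)) * (((∏ j, (k j).factorial : ℕ) : ℂ) *
                  ∑ g ∈ WreathZSF.Fk k, ∏ i, ω (g i) (y.left i))) := by
              refine Finset.sum_congr rfl fun f hf => ?_
              rw [← Finset.mul_sum, ← Finset.mul_sum, hTsum f hf]
          _ = (Fintype.card L : ℂ) ^ n * (((∏ j, (k j).factorial : ℕ) : ℂ) *
                ((∑ f ∈ WreathZSF.Fk k, ∏ i, ω (f i) (x.left i)) *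
                 (∑ f ∈ WreathZSF.Fk k, ∏ i, ω (f i) (y.left i)))) := by
              have hre : ∀ f ∈ WreathZSF.Fk (n := n) k,
                  (Fintype.card L : ℂ) ^ n *
                    ((∏ i, ω (f i) (x.left i)) * (((∏ j, (k j).factorial : ℕ) : ℂ) *
                      ∑ g ∈ WreathZSF.Fk k, ∏ i, ω (g i) (y.left i)))
                  = (∏ i, ω (f i) (x.left i)) *
                    ((Fintype.card L : ℂ) ^ n * (((∏ j, (k j).factorial : ℕ) : ℂ) *
                      ∑ g ∈ WreathZSF.Fk k, ∏ i, ω (g i) (y.left i))) := fun f _ => by ring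
              rw [Finset.sum_congr rfl hre, ← Finset.sum_mul]
              ring
      rw [← Finset.mul_sum, key, card_wreathSubgroup L]
      have h3 := Nat.multinomial_spec Finset.univ k
      rw [hk] at h3
      have hfac : (((∏ j, (k j).factorial : ℕ) : ℂ)) * (Nat.multinomial Finset.univ k : ℂ)
          = (n.factorial : ℂ) := by
        exact_mod_cast congrArg (Nat.cast : ℕ → ℂ) h3
      have hprodne : (((∏ j, (k j).factorial : ℕ) : ℂ)) ≠ 0 := by
        refine Nat.cast_ne_zero.mpr ?_
        exact (Finset.prod_pos fun j _ => Nat.factorial_pos _).ne'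
      rw [Nat.cast_mul, Nat.cast_pow, ← hfac]
      have hcLn : ((Fintype.card L : ℂ)) ^ n ≠ 0 := pow_ne_zero _ hcL
      set A := ((Fintype.card L : ℂ)) ^ n with hA
      set P := (((∏ j, (k j).factorial : ℕ) : ℂ)) with hP
      set N := ((Nat.multinomial Finset.univ k : ℂ)) with hNN
      have hNne' : N ≠ 0 := hNne k
      field_simp
end

section
/- In the setting of the wreath product Gelfand pair (K ≀ S_n, L ≀ S_n), for x ∈ L^j × D_0 × L^{n−j−1} (that is, all coordinates in L except one lying in the double coset D_0 = Lx_0L), the zonal spherical function Ω_k evaluated at x equals ∑_{i=0}^{s-1} (k_i/n)·ω_i(x_0). -/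
open scoped BigOperators

attribute [local instance] Classical.propDecidable

lemma myCoeSymm {s : ℕ} (m : Fin s → ℕ) : ⇑(Finsupp.equivFunOnFinite.symm m) = m := rfl

lemma myProdXPow {s : ℕ} (m : Fin s → ℕ) :
    (∏ i : Fin s, (MvPolynomial.X i : MvPolynomial (Fin s) ℂ) ^ m i) =
      MvPolynomial.monomial (Finsupp.equivFunOnFinite.symm m) 1 := by
  classical
  rw [← MvPolynomial.prod_X_pow_eq_monomial, myCoeSymm]
  symm
  apply Finset.prod_subset (Finset.subset_univ _)
  intro i _ hi
  have : m i = 0 := by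
    have := Finsupp.notMem_support_iff.mp hi
    rwa [myCoeSymm] at this
  simp [this]

lemma myCoeffPow {s : ℕ} (N : ℕ) (d : Fin s →₀ ℕ) :
    MvPolynomial.coeff d ((∑ j : Fin s, MvPolynomial.X j : MvPolynomial (Fin s) ℂ) ^ N) =
      if ∑ i, d i = N then (Nat.multinomial Finset.univ d : ℂ) else 0 := by
  classical
  rw [Finset.sum_pow_eq_sum_piAntidiag, MvPolynomial.coeff_sum]
  have h1 : ∀ m ∈ Finset.piAntidiag Finset.univ N,
      MvPolynomial.coeff d ((Nat.multinomial Finset.univ m : MvPolynomial (Fin s) ℂ) *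
        ∏ i, MvPolynomial.X i ^ m i)
        = if m = ⇑d then (Nat.multinomial Finset.univ m : ℂ) else 0 := by
    intro m _
    rw [show ((Nat.multinomial Finset.univ m : MvPolynomial (Fin s) ℂ))
        = MvPolynomial.C ((Nat.multinomial Finset.univ m : ℂ)) from (map_natCast MvPolynomial.C _).symm,
      MvPolynomial.coeff_C_mul, myProdXPow, MvPolynomial.coeff_monomial]
    have heq : (Finsupp.equivFunOnFinite.symm m = d) ↔ m = ⇑d := by
      rw [Equiv.symm_apply_eq]; rfl
    by_cases h : m = ⇑d <;> simp [heq, h]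
  rw [Finset.sum_congr rfl h1, Finset.sum_ite_eq' (Finset.piAntidiag Finset.univ N) (⇑d)]
  simp [Finset.mem_piAntidiag]

lemma myMultUpdate {s n : ℕ} (k : Fin s → ℕ) (hk : ∑ i, k i = n) (j : Fin s) (hj : k j ≠ 0) :
    Nat.multinomial Finset.univ (Function.update k j (k j - 1)) * n
      = k j * Nat.multinomial Finset.univ k := by
  classical
  set m := Function.update k j (k j - 1) with hm
  have hkj : 0 < k j := Nat.pos_of_ne_zero hj
  have hsplit : k j + ∑ i ∈ Finset.univ \ {j}, k i = n := by
    rw [← Finset.erase_eq, Finset.add_sum_erase _ k (Finset.mem_univ j), hk]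
  have hmsum : ∑ i, m i = n - 1 := by
    rw [hm, Finset.sum_update_of_mem (Finset.mem_univ j)]
    omega
  have hprod : ∏ i, Nat.factorial (k i) = k j * ∏ i, Nat.factorial (m i) := by
    rw [← Finset.mul_prod_erase Finset.univ _ (Finset.mem_univ j),
        ← Finset.mul_prod_erase Finset.univ (fun i => Nat.factorial (m i)) (Finset.mem_univ j)]
    have h2 : ∏ i ∈ Finset.univ.erase j, Nat.factorial (m i)
        = ∏ i ∈ Finset.univ.erase j, Nat.factorial (k i) :=
      Finset.prod_congr rfl fun i hi => by
        rw [hm, Function.update_of_ne (Finset.ne_of_mem_erase hi)]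
    rw [h2, hm, Function.update_self, ← mul_assoc, Nat.mul_factorial_pred hkj.ne']
  have hn : 0 < n := by omega
  have hspec1 := Nat.multinomial_spec Finset.univ m
  have hspec2 := Nat.multinomial_spec Finset.univ k
  rw [hmsum] at hspec1
  rw [hk] at hspec2
  have hpos : 0 < ∏ i, Nat.factorial (k i) :=
    Finset.prod_pos fun i _ => Nat.factorial_pos (k i)
  refine Nat.eq_of_mul_eq_mul_left hpos ?_
  calc (∏ i, Nat.factorial (k i)) * (Nat.multinomial Finset.univ m * n)
      = k j * (((∏ i, Nat.factorial (m i)) * Nat.multinomial Finset.univ m) * n) := by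
        rw [hprod]; ring
    _ = k j * (Nat.factorial (n-1) * n) := by rw [hspec1]
    _ = k j * Nat.factorial n := by
        rw [mul_comm (Nat.factorial (n-1)) n, Nat.mul_factorial_pred hn.ne']
    _ = (∏ i, Nat.factorial (k i)) * (k j * Nat.multinomial Finset.univ k) := by
        rw [← hspec2]; ring

/-- Value of the wreath-product zonal spherical function `Ω_k` at an element all of whose
coordinates lie in `L` except one lying in the double coset `D₀ = L x₀ L`:
`Ω_k(x) = ∑_i (k_i/n) ω_i(x₀)`. -/
theorem zsf_value_on_one_dcoset_coordinate
    (K : Type) [Group K] [Fintype K] (L : Subgroup K)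
    (hGP : IsGelfandPair K L)
    (s : ℕ) [NeZero s] (hs : 2 ≤ s)
    (ω : Fin s → K → ℂ)
    (hzsf : ∀ i, IsZSF K L (ω i))
    (hω0 : ∀ g : K, ω 0 g = 1)
    (hinj : Function.Injective ω)
    (hcomplete : s = Nat.card (DoubleCoset.Quotient (L : Set K) (L : Set K)))
    (x₀ : K) (hx₀ : x₀ ∉ L)
    (n : ℕ) (hn : 0 < n)
    (Ω : (Fin s → ℕ) → (Fin n → K) → ℂ)
    (hGen : GenId K s n ω Ω)
    (hΩ : ∀ k : Fin s → ℕ, (∑ i, k i = n) →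
      IsZSF (Wreath n K) (wreathSubgroup n K L) (fun w => Ω k w.left))
    (x : Fin n → K) (j : Fin n)
    (hxj : x j ∈ dcoset K L x₀) (hx : ∀ i : Fin n, i ≠ j → x i ∈ L)
    (k : Fin s → ℕ) (hk : ∑ i, k i = n) :
    Ω k x = ∑ i : Fin s, ((k i : ℂ) / n) * ω i x₀ := by
  classical
  obtain ⟨a, ha, b, hb, hab⟩ := hxj
  have hfac2 : ∀ jj, ω jj (x j) = ω jj x₀ := fun jj => by
    rw [hab]; exact (hzsf jj).2.1 x₀ a ha b hb
  have hfac1 : ∀ i : Fin n, i ≠ j → ∀ jj, ω jj (x i) = 1 := by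
    intro i hi jj
    have h := (hzsf jj).2.1 1 (x i) (hx i hi) 1 L.one_mem
    simpa [(hzsf jj).1] using h
  have hprod : (∏ i : Fin n, ∑ jj : Fin s, MvPolynomial.C (ω jj (x i)) * MvPolynomial.X jj)
      = (∑ jj : Fin s, MvPolynomial.C (ω jj x₀) * MvPolynomial.X jj) *
        (∑ jj : Fin s, (MvPolynomial.X jj : MvPolynomial (Fin s) ℂ)) ^ (n - 1) := by
    rw [← Finset.mul_prod_erase Finset.univ _ (Finset.mem_univ j)]
    congr 1
    · exact Finset.sum_congr rfl fun jj _ => by rw [hfac2 jj]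
    · have h1 : ∀ i ∈ Finset.univ.erase j,
          (∑ jj : Fin s, MvPolynomial.C (ω jj (x i)) * MvPolynomial.X jj)
            = ∑ jj : Fin s, (MvPolynomial.X jj : MvPolynomial (Fin s) ℂ) := by
        intro i hi
        exact Finset.sum_congr rfl fun jj _ => by
          rw [hfac1 i (Finset.ne_of_mem_erase hi) jj, MvPolynomial.C_1, one_mul]
      rw [Finset.prod_congr rfl h1, Finset.prod_const,
        Finset.card_erase_of_mem (Finset.mem_univ j), Finset.card_univ, Fintype.card_fin]
  have hGx := hGen x k hk
  rw [hprod] at hGx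
  set d : Fin s →₀ ℕ := Finsupp.equivFunOnFinite.symm k with hd
  set t : Fin s → ℂ := fun jj => if k jj = 0 then 0
    else (Nat.multinomial Finset.univ (Function.update k jj (k jj - 1)) : ℂ) with ht
  have hdapp : ∀ i, d i = k i := fun i => rfl
  have hterm : ∀ jj : Fin s,
      MvPolynomial.coeff d ((MvPolynomial.C (ω jj x₀) * MvPolynomial.X jj) *
        (∑ jj : Fin s, (MvPolynomial.X jj : MvPolynomial (Fin s) ℂ)) ^ (n - 1))
        = ω jj x₀ * t jj := by
    intro jj
    rw [mul_assoc, MvPolynomial.coeff_C_mul, MvPolynomial.coeff_X_mul']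
    congr 1
    by_cases h0 : k jj = 0
    · rw [if_neg, ht]
      · simp [h0]
      · simp [Finsupp.mem_support_iff, hdapp jj, h0]
    · have hmem : jj ∈ d.support := by
        simp [Finsupp.mem_support_iff, hdapp jj, h0]
      rw [if_pos hmem]
      have hsub : d - Finsupp.single jj 1
          = Finsupp.equivFunOnFinite.symm (Function.update k jj (k jj - 1)) := by
        ext i
        rw [Finsupp.tsub_apply]
        show d i - Finsupp.single jj 1 i = Function.update k jj (k jj - 1) i
        rw [hdapp i]
        by_cases hij : i = jj
        · subst hij; simp [Finsupp.single_apply]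
        · simp [Finsupp.single_apply, Ne.symm hij, Function.update_of_ne hij]
      have hsum : ∑ i, Function.update k jj (k jj - 1) i = n - 1 := by
        rw [Finset.sum_update_of_mem (Finset.mem_univ jj)]
        have hsp : k jj + ∑ i ∈ Finset.univ \ {jj}, k i = n := by
          rw [← Finset.erase_eq, Finset.add_sum_erase _ k (Finset.mem_univ jj), hk]
        omega
      rw [hsub, myCoeffPow]
      simp only [myCoeSymm]
      simp only [hsum, if_true]
      simp only [ht, h0, if_false]
  rw [Finset.sum_mul, MvPolynomial.coeff_sum,
    Finset.sum_congr rfl (fun jj _ => hterm jj)] at hGx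
  have hnC : (n : ℂ) ≠ 0 := Nat.cast_ne_zero.mpr hn.ne'
  have hmC : (Nat.multinomial Finset.univ k : ℂ) ≠ 0 :=
    Nat.cast_ne_zero.mpr (Nat.multinomial_pos _ _).ne'
  have hB : ∀ jj, t jj * n = (k jj : ℂ) * (Nat.multinomial Finset.univ k : ℂ) := by
    intro jj
    by_cases h0 : k jj = 0
    · simp [ht, h0]
    · rw [ht]
      simp only [h0, if_false]
      exact_mod_cast congrArg (Nat.cast : ℕ → ℂ) (myMultUpdate k hk jj h0)
  have hfin : (Nat.multinomial Finset.univ k : ℂ) * Ω k x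
      = (Nat.multinomial Finset.univ k : ℂ) * ∑ i, ((k i : ℂ)/n) * ω i x₀ := by
    rw [← hGx, Finset.mul_sum]
    refine Finset.sum_congr rfl fun jj _ => ?_
    have := hB jj
    field_simp
    linear_combination ω jj x₀ * this
  exact mul_left_cancel₀ hmC hfin
end

section
/- Write ω_1² = ∑_{j=0}^{s-1} a_j ω_j in the Hecke algebra of the Gelfand pair (K,L). Then for Q(x̄) = (1/n)∑_{j=1}^n ω_1(x_j), one has Q(x̄)² = a_0/n + (1/n)∑_{j=1}^{s-1} a_j Ω_{(n-1,0,...,1,...,0)}(x) + (1−1/n)·Ω_{(n-2,2,0,...,0)}(x), where the index (n−1,0,...,1,...,0) has the 1 in position j. -/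
open scoped BigOperators

attribute [local instance] Classical.propDecidable

section Q2Helpers

open Finset MvPolynomial

lemma prod_monomial' {ι σ R : Type*} [CommSemiring R] (t : Finset ι) (d : ι → σ →₀ ℕ) (a : ι → R) :
    ∏ i ∈ t, monomial (d i) (a i) = monomial (∑ i ∈ t, d i) (∏ i ∈ t, a i) := by
  induction t using Finset.cons_induction with
  | empty => simp [MvPolynomial.monomial_zero', ← MvPolynomial.C_0]
  | cons x t hx ih => rw [Finset.prod_cons, Finset.sum_cons, Finset.prod_cons, ih, MvPolynomial.monomial_mul]

lemma coeff_linprod {n s : ℕ} (c : Fin n → Fin s → ℂ) (m : Fin s →₀ ℕ) :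
    MvPolynomial.coeff m (∏ i : Fin n, ∑ j : Fin s, MvPolynomial.C (c i j) * MvPolynomial.X j)
      = ∑ g : Fin n → Fin s,
          if (∑ i : Fin n, Finsupp.single (g i) 1) = m then ∏ i : Fin n, c i (g i) else 0 := by
  classical
  rw [Finset.prod_univ_sum]
  simp only [MvPolynomial.C_mul_X_eq_monomial, prod_monomial', MvPolynomial.coeff_sum,
    MvPolynomial.coeff_monomial, Fintype.piFinset_univ]


lemma cond_iff {n s : ℕ} (g : Fin n → Fin s) (k : Fin s → ℕ) :
    (∑ i : Fin n, Finsupp.single (g i) 1) = Finsupp.equivFunOnFinite.symm k ↔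
      ∀ j : Fin s, #{i : Fin n | g i = j} = k j := by
  classical
  rw [Finsupp.ext_iff]
  apply forall_congr' fun j => ?_
  rw [Finsupp.finset_sum_apply]
  simp only [Finsupp.single_apply, Finsupp.coe_equivFunOnFinite_symm]
  rw [← Finset.card_filter]


lemma filter_one {n s : ℕ} [NeZero s] (j₀ : Fin s) (hj : j₀ ≠ 0) :
    ({g : Fin n → Fin s |
        ∀ j : Fin s, #{i : Fin n | g i = j} = (if j = 0 then n - 1 else if j = j₀ then 1 else 0)} : Finset _)
      = Finset.univ.image (fun i₀ : Fin n => fun i => if i = i₀ then j₀ else (0 : Fin s)) := by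
  ext g
  simp only [Finset.mem_filter, Finset.mem_univ, true_and, Finset.mem_image]
  constructor
  · intro h
    have h1 : #{i : Fin n | g i = j₀} = 1 := by simpa [hj, (Ne.symm hj)] using h j₀
    obtain ⟨i₀, hi₀⟩ := Finset.card_eq_one.mp h1
    refine ⟨i₀, funext fun i => ?_⟩
    by_cases hii : i = i₀
    · subst hii
      have : i ∈ ({i | g i = j₀} : Finset (Fin n)) := by rw [hi₀]; exact Finset.mem_singleton_self i
      simp only [Finset.mem_filter] at this
      simp [this.2]
    · simp only [if_neg hii]
      by_contra hne
      have hgj : g i ≠ j₀ := fun hgi => hii (by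
        have : i ∈ ({i | g i = j₀} : Finset (Fin n)) := by
          simp only [Finset.mem_filter]; exact ⟨Finset.mem_univ _, hgi⟩
        rw [hi₀] at this; exact Finset.mem_singleton.mp this)
      have h0 := h (g i)
      rw [if_neg (fun hx => hne hx.symm), if_neg hgj] at h0
      have : i ∈ ({i' | g i' = g i} : Finset (Fin n)) := by simp
      rw [Finset.card_eq_zero.mp h0] at this
      exact absurd this (Finset.notMem_empty i)
  · rintro ⟨i₀, rfl⟩
    intro j
    by_cases hj0 : j = 0
    · subst hj0
      have : ({i : Fin n | (if i = i₀ then j₀ else (0 : Fin s)) = 0} : Finset _) = Finset.univ.erase i₀ := by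
        ext i
        by_cases hii : i = i₀ <;> simp [hii, hj]
      rw [this, if_pos rfl, Finset.card_erase_of_mem (Finset.mem_univ _), Finset.card_univ,
        Fintype.card_fin]
    · by_cases hjj : j = j₀
      · have : ({i : Fin n | (if i = i₀ then j₀ else (0 : Fin s)) = j} : Finset _) = {i₀} := by
          ext i
          by_cases hii : i = i₀ <;> simp [hii, hjj, Ne.symm hj]
        rw [this, if_neg hj0, if_pos hjj, Finset.card_singleton]
      · have : ({i : Fin n | (if i = i₀ then j₀ else (0 : Fin s)) = j} : Finset _) = ∅ := by
          ext i
          by_cases hii : i = i₀ <;> simp [hii, Ne.symm hjj, Ne.symm hj0]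
        rw [this, if_neg hj0, if_neg hjj, Finset.card_empty]


lemma two_sum_lt {n : ℕ} (f : Fin n → ℂ) :
    2 * ∑ p ∈ ({p : Fin n × Fin n | p.1 < p.2} : Finset _), f p.1 * f p.2
      = (∑ i, f i) ^ 2 - ∑ i, f i ^ 2 := by
  have h1 : (∑ i, f i) ^ 2 = ∑ p : Fin n × Fin n, f p.1 * f p.2 := by
    rw [sq, Fintype.sum_mul_sum, Fintype.sum_prod_type]
  have h2 := Finset.sum_filter_add_sum_filter_not (Finset.univ : Finset (Fin n × Fin n))
    (fun p => p.1 < p.2) (fun p => f p.1 * f p.2)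
  have h3 := Finset.sum_filter_add_sum_filter_not
    ((Finset.univ : Finset (Fin n × Fin n)).filter (fun p => ¬ p.1 < p.2))
    (fun p => p.1 = p.2) (fun p => f p.1 * f p.2)
  have hdiag : ∑ p ∈ (((Finset.univ : Finset (Fin n × Fin n)).filter (fun p => ¬ p.1 < p.2)).filter
      (fun p => p.1 = p.2)), f p.1 * f p.2 = ∑ i, f i ^ 2 := by
    apply Finset.sum_nbij' (i := fun p => p.1) (j := fun i => (i, i)) <;>
      simp +contextual [sq, le_of_eq, lt_irrefl]
  have hgt : ∑ p ∈ (((Finset.univ : Finset (Fin n × Fin n)).filter (fun p => ¬ p.1 < p.2)).filter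
      (fun p => ¬ p.1 = p.2)), f p.1 * f p.2
      = ∑ p ∈ ({p : Fin n × Fin n | p.1 < p.2} : Finset _), f p.1 * f p.2 := by
    apply Finset.sum_nbij' (i := Prod.swap) (j := Prod.swap)
    · intro p hp
      simp only [Finset.mem_filter, Finset.mem_univ, true_and] at hp ⊢
      exact lt_of_le_of_ne (not_lt.mp hp.1) (Ne.symm hp.2)
    · intro p hp
      simp only [Finset.mem_filter, Finset.mem_univ, true_and] at hp ⊢
      exact ⟨not_lt.mpr hp.le, by simp [hp.ne']⟩
    · intro a _; simp
    · intro a _; simp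
    · intro a _; simp [mul_comm]
  rw [h1, ← h2, ← h3, hdiag, hgt]
  ring


lemma filter_two {n s : ℕ} [NeZero s] (j₁ : Fin s) (hj : j₁ ≠ 0) :
    ({g : Fin n → Fin s |
        ∀ j : Fin s, #{i : Fin n | g i = j} = (if j = 0 then n - 2 else if j = j₁ then 2 else 0)} : Finset _)
      = ({p : Fin n × Fin n | p.1 < p.2} : Finset _).image
          (fun p => fun i => if i = p.1 ∨ i = p.2 then j₁ else (0 : Fin s)) := by
  ext g
  simp only [Finset.mem_filter, Finset.mem_univ, true_and, Finset.mem_image]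
  constructor
  · intro h
    have h2 : #{i : Fin n | g i = j₁} = 2 := by simpa [hj, Ne.symm hj] using h j₁
    obtain ⟨a, b, hab, hset⟩ := Finset.card_eq_two.mp h2
    -- wlog a < b
    obtain hlt | hlt := hab.lt_or_gt
    case' inr =>
      rw [Finset.pair_comm] at hset
    all_goals {
      first
      | refine ⟨(a, b), by simpa using hlt, funext fun i => ?_⟩
      | refine ⟨(b, a), by simpa using hlt, funext fun i => ?_⟩
      by_cases hii : i = a ∨ i = b
      · have : i ∈ ({i | g i = j₁} : Finset (Fin n)) := by
          rw [hset]; simp only [Finset.mem_insert, Finset.mem_singleton]; tauto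
        simp only [Finset.mem_filter] at this
        simp only [this.2]
        first
        | rw [if_pos hii]
        | rw [if_pos (Or.symm hii)]
      · have hgj : g i ≠ j₁ := fun hgi => hii (by
          have : i ∈ ({i | g i = j₁} : Finset (Fin n)) := by
            simp only [Finset.mem_filter]; exact ⟨Finset.mem_univ _, hgi⟩
          rw [hset] at this
          simp only [Finset.mem_insert, Finset.mem_singleton] at this; tauto)
        have hg0 : g i = 0 := by
          by_contra hne
          have h0 := h (g i)
          rw [if_neg (fun hx => hne hx), if_neg hgj] at h0
          have : i ∈ ({i' | g i' = g i} : Finset (Fin n)) := by simp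
          rw [Finset.card_eq_zero.mp h0] at this
          exact absurd this (Finset.notMem_empty i)
        rw [hg0]
        first
        | rw [if_neg hii]
        | rw [if_neg (fun hc => hii (Or.symm hc))]
    }
  · rintro ⟨p, hp, rfl⟩
    have hp : p.1 < p.2 := by simpa using hp
    intro j
    by_cases hj0 : j = 0
    · have : ({i : Fin n | (if i = p.1 ∨ i = p.2 then j₁ else (0 : Fin s)) = j} : Finset _)
          = Finset.univ \ {p.1, p.2} := by
        ext i
        by_cases hii : i = p.1 ∨ i = p.2 <;> simp [hii, hj0, hj, hj0 ▸ hj] <;> tauto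
      rw [this, if_pos hj0, Finset.card_sdiff_of_subset (Finset.subset_univ _),
        Finset.card_pair hp.ne, Finset.card_univ, Fintype.card_fin]
    · by_cases hjj : j = j₁
      · have : ({i : Fin n | (if i = p.1 ∨ i = p.2 then j₁ else (0 : Fin s)) = j} : Finset _)
            = {p.1, p.2} := by
          ext i
          by_cases hii : i = p.1 ∨ i = p.2 <;> simp [hii, hjj, Ne.symm hj] <;> tauto
        rw [this, if_neg hj0, if_pos hjj, Finset.card_pair hp.ne]
      · have : ({i : Fin n | (if i = p.1 ∨ i = p.2 then j₁ else (0 : Fin s)) = j} : Finset _) = ∅ := by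
          ext i
          by_cases hii : i = p.1 ∨ i = p.2 <;> simp [hii, Ne.symm hjj, Ne.symm hj0] <;> tauto
        rw [this, if_neg hj0, if_neg hjj, Finset.card_empty]


lemma multinomial_subset {α : Type*} (s t : Finset α) (f : α → ℕ) (hst : s ⊆ t)
    (h : ∀ i ∈ t, i ∉ s → f i = 0) : Nat.multinomial t f = Nat.multinomial s f := by
  unfold Nat.multinomial
  rw [Finset.sum_subset hst h, Finset.prod_subset hst (fun i hi his => by rw [h i hi his]; rfl)]

lemma multinomial_one {s : ℕ} [NeZero s] (n : ℕ) (hn : 1 ≤ n) (j₀ : Fin s) (hj : j₀ ≠ 0) :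
    Nat.multinomial Finset.univ (fun i => if i = 0 then n - 1 else if i = j₀ then 1 else 0) = n := by
  rw [multinomial_subset {0, j₀} Finset.univ _ (Finset.subset_univ _)
    (fun i _ hi => by
      simp only [Finset.mem_insert, Finset.mem_singleton, not_or] at hi
      simp [hi.1, hi.2])]
  rw [Nat.binomial_eq_choose (by simpa using Ne.symm hj)]
  simp only [if_true, if_neg hj]
  have : n - 1 + 1 = n := by omega
  rw [this]
  rw [Nat.choose_symm (by omega : 1 ≤ n), Nat.choose_one_right]

lemma multinomial_two {s : ℕ} [NeZero s] (n : ℕ) (hn : 2 ≤ n) (j₁ : Fin s) (hj : j₁ ≠ 0) :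
    Nat.multinomial Finset.univ (fun i => if i = 0 then n - 2 else if i = j₁ then 2 else 0)
      = n.choose 2 := by
  rw [multinomial_subset {0, j₁} Finset.univ _ (Finset.subset_univ _)
    (fun i _ hi => by
      simp only [Finset.mem_insert, Finset.mem_singleton, not_or] at hi
      simp [hi.1, hi.2])]
  rw [Nat.binomial_eq_choose (by simpa using Ne.symm hj)]
  simp only [if_true, if_neg hj]
  have h1 : n - 2 + 2 = n := by omega
  rw [h1, Nat.choose_symm (by omega : 2 ≤ n)]


lemma coeff_one {n s : ℕ} [NeZero s] (c : Fin n → Fin s → ℂ) (hc : ∀ i, c i 0 = 1)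
    (j₀ : Fin s) (hj : j₀ ≠ 0) :
    MvPolynomial.coeff
        (Finsupp.equivFunOnFinite.symm fun i => if i = 0 then n - 1 else if i = j₀ then 1 else 0)
        (∏ i : Fin n, ∑ j : Fin s, MvPolynomial.C (c i j) * MvPolynomial.X j)
      = ∑ i, c i j₀ := by
  rw [coeff_linprod]
  rw [Finset.sum_congr rfl (fun g (_ : g ∈ Finset.univ) =>
    if_congr (cond_iff g fun i => if i = 0 then n - 1 else if i = j₀ then 1 else 0) rfl rfl)]
  rw [← Finset.sum_filter, filter_one j₀ hj,
    Finset.sum_image (by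
      intro i₀ _ i₁ _ hfe
      by_contra hne
      have h := congrFun hfe i₀
      beta_reduce at h
      rw [if_pos rfl, if_neg hne] at h
      exact hj h)]
  refine Finset.sum_congr rfl fun i₀ _ => ?_
  rw [← Finset.prod_subset (Finset.subset_univ {i₀}) (fun i _ hi => by
    show c i (if i = i₀ then j₀ else 0) = 1
    rw [if_neg (by simpa using hi), hc])]
  simp

lemma coeff_two {n s : ℕ} [NeZero s] (c : Fin n → Fin s → ℂ) (hc : ∀ i, c i 0 = 1)
    (j₁ : Fin s) (hj : j₁ ≠ 0) :
    MvPolynomial.coeff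
        (Finsupp.equivFunOnFinite.symm fun i => if i = 0 then n - 2 else if i = j₁ then 2 else 0)
        (∏ i : Fin n, ∑ j : Fin s, MvPolynomial.C (c i j) * MvPolynomial.X j)
      = ∑ p ∈ ({p : Fin n × Fin n | p.1 < p.2} : Finset _), c p.1 j₁ * c p.2 j₁ := by
  rw [coeff_linprod]
  rw [Finset.sum_congr rfl (fun g (_ : g ∈ Finset.univ) =>
    if_congr (cond_iff g fun i => if i = 0 then n - 2 else if i = j₁ then 2 else 0) rfl rfl)]
  rw [← Finset.sum_filter, filter_two j₁ hj,
    Finset.sum_image (by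
      intro p hp q hq hfe
      simp only [Finset.mem_coe, Finset.mem_filter, Finset.mem_univ, true_and] at hp hq
      have key : ∀ i : Fin n, (i = p.1 ∨ i = p.2) ↔ (i = q.1 ∨ i = q.2) := by
        intro i
        constructor <;> intro hi
        · by_contra hcon
          have h := congrFun hfe i
          beta_reduce at h
          rw [if_pos hi, if_neg hcon] at h
          exact hj h
        · by_contra hcon
          have h := congrFun hfe i
          beta_reduce at h
          rw [if_neg hcon, if_pos hi] at h
          exact hj h.symm
      have hp1 := (key p.1).mp (Or.inl rfl)
      have hp2 := (key p.2).mp (Or.inr rfl)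
      have hq1 := (key q.1).mpr (Or.inl rfl)
      have hq2 := (key q.2).mpr (Or.inr rfl)
      have e1 : p.1 = q.1 := by
        rcases hp1 with h1 | h1
        · exact h1
        · exfalso
          rcases hq1 with h2 | h2
          · exact absurd (h2.trans h1) hq.ne
          · exact absurd (lt_trans hq (lt_of_lt_of_eq (lt_of_eq_of_lt h1.symm hp) h2.symm))
              (lt_irrefl _)
      have e2 : p.2 = q.2 := by
        rcases hp2 with h2 | h2
        · exfalso
          rcases hq2 with h3 | h3
          · exact absurd (lt_trans (lt_of_lt_of_eq (lt_of_eq_of_lt h2 hq) h3) hp) (lt_irrefl _)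
          · exact absurd (h2.symm.trans h3.symm) hq.ne
        · exact h2
      exact Prod.ext e1 e2)]
  refine Finset.sum_congr rfl fun p hp => ?_
  have hne : p.1 ≠ p.2 := by
    simp only [Finset.mem_filter] at hp
    exact hp.2.ne
  rw [← Finset.prod_subset (Finset.subset_univ {p.1, p.2}) (fun i _ hi => by
    show c i (if i = p.1 ∨ i = p.2 then j₁ else 0) = 1
    rw [if_neg (by simpa using hi), hc])]
  rw [Finset.prod_pair hne]
  show c p.1 (if p.1 = p.1 ∨ p.1 = p.2 then j₁ else 0) * c p.2 (if p.2 = p.1 ∨ p.2 = p.2 then j₁ else 0) = _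
  rw [if_pos (Or.inl rfl), if_pos (Or.inr rfl)]

end Q2Helpers

/-- Expansion of `Q²` (Proposition `Q2`): writing `ω₁² = ∑_j a_j ω_j`, one has
`Q(x̄)² = a₀/n + (1/n) ∑_{j=1}^{s-1} a_j Ω_{(n-1,0,…,1,…,0)}(x) + (1 - 1/n) Ω_{(n-2,2,0,…,0)}(x)`. -/
theorem Q_squared_expansion
    (K : Type) [Group K] [Fintype K] (L : Subgroup K)
    (hGP : IsGelfandPair K L)
    (s : ℕ) [NeZero s] (hs : 2 ≤ s)
    (ω : Fin s → K → ℂ)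
    (hzsf : ∀ i, IsZSF K L (ω i))
    (hω0 : ∀ g : K, ω 0 g = 1)
    (hinj : Function.Injective ω)
    (hcomplete : s = Nat.card (DoubleCoset.Quotient (L : Set K) (L : Set K)))
    (a : Fin s → ℂ)
    (ha : ∀ g : K, (ω ⟨1, hs⟩ g) ^ 2 = ∑ j : Fin s, a j * ω j g)
    (n : ℕ) (hn : 2 ≤ n)
    (Ω : (Fin s → ℕ) → (Fin n → K) → ℂ)
    (hGen : GenId K s n ω Ω)
    (x : Fin n → K) :
    ((n : ℂ)⁻¹ * ∑ j : Fin n, ω ⟨1, hs⟩ (x j)) ^ 2 =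
      a 0 / n +
        (n : ℂ)⁻¹ * ∑ j ∈ Finset.univ.erase (0 : Fin s),
          a j * Ω (fun i => if i = 0 then n - 1 else if i = j then 1 else 0) x +
        (1 - (n : ℂ)⁻¹) *
          Ω (fun i => if i = 0 then n - 2 else if i = ⟨1, hs⟩ then 2 else 0) x := by
  
    classical
    have hn0 : (n : ℂ) ≠ 0 := Nat.cast_ne_zero.mpr (by omega)
    have hn1 : (n : ℂ) - 1 ≠ 0 := by
      intro h
      have h' : (n : ℂ) = ((1 : ℕ) : ℂ) := by
        rw [Nat.cast_one]; linear_combination h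
      have := Nat.cast_injective (R := ℂ) h'
      omega
    have hj₁ : (⟨1, hs⟩ : Fin s) ≠ 0 := by
      simp [Fin.ext_iff]
    have hc0 : ∀ i : Fin n, (fun (i : Fin n) (j : Fin s) => ω j (x i)) i 0 = 1 :=
      fun i => hω0 (x i)
    -- the `Ω` values for the (n-1,…,1,…) indices
    have hΩ1 : ∀ j : Fin s, j ≠ 0 →
        (n : ℂ) * Ω (fun i => if i = 0 then n - 1 else if i = j then 1 else 0) x
          = ∑ i, ω j (x i) := by
      intro j hj
      have hksum : ∑ i : Fin s, (if i = 0 then n - 1 else if i = j then 1 else 0) = n := by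
        rw [Finset.sum_congr rfl (fun i (_ : i ∈ Finset.univ) =>
          show (if i = 0 then n - 1 else if i = j then 1 else 0)
              = (if i = 0 then n - 1 else 0) + (if i = j then 1 else 0) by
            by_cases h0 : i = 0
            · subst h0; simp [Ne.symm hj]
            · by_cases hjj : i = j <;> simp [h0, hjj, hj])]
        rw [Finset.sum_add_distrib]
        simp only [Finset.sum_ite_eq', Finset.mem_univ, if_true]
        omega
      have hgen := hGen x _ hksum
      rw [coeff_one (fun (i : Fin n) (j : Fin s) => ω j (x i)) hc0 j hj,
        multinomial_one n (by omega) j hj] at hgen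
      exact hgen.symm
    -- the `Ω` value for the (n-2,2,0,…) index
    have hΩ2 : (n : ℂ) * ((n : ℂ) - 1) *
        Ω (fun i => if i = 0 then n - 2 else if i = ⟨1, hs⟩ then 2 else 0) x
          = (∑ i, ω ⟨1, hs⟩ (x i)) ^ 2 - ∑ i, ω ⟨1, hs⟩ (x i) ^ 2 := by
      have hksum : ∑ i : Fin s, (if i = 0 then n - 2 else if i = ⟨1, hs⟩ then 2 else 0) = n := by
        rw [Finset.sum_congr rfl (fun (i : Fin s) (_ : i ∈ Finset.univ) =>
          show (if i = 0 then n - 2 else if i = (⟨1, hs⟩ : Fin s) then 2 else 0)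
              = (if i = 0 then n - 2 else 0) + (if i = (⟨1, hs⟩ : Fin s) then 2 else 0) by
            by_cases h0 : i = 0
            · subst h0; simp [Ne.symm hj₁]
            · by_cases hjj : i = ⟨1, hs⟩ <;> simp [h0, hjj, hj₁])]
        rw [Finset.sum_add_distrib]
        simp only [Finset.sum_ite_eq', Finset.mem_univ, if_true]
        omega
      have hgen := hGen x _ hksum
      rw [coeff_two (fun (i : Fin n) (j : Fin s) => ω j (x i)) hc0 ⟨1, hs⟩ hj₁,
        multinomial_two n hn ⟨1, hs⟩ hj₁] at hgen
      have h2 := two_sum_lt (fun i => ω ⟨1, hs⟩ (x i))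
      have hch : (2 * n.choose 2 : ℕ) = n * (n - 1) := by
        rw [Nat.choose_two_right, Nat.mul_div_cancel']
        have he : Even ((n - 1) * (n - 1 + 1)) := Nat.even_mul_succ_self _
        rw [show n - 1 + 1 = n from by omega] at he
        rw [mul_comm]
        exact he.two_dvd
      have hcast : ((n * (n - 1) : ℕ) : ℂ) = (n : ℂ) * ((n : ℂ) - 1) := by
        push_cast [Nat.cast_sub (by omega : 1 ≤ n)]
        ring
      have key : ((2 * n.choose 2 : ℕ) : ℂ) *
          Ω (fun i => if i = 0 then n - 2 else if i = ⟨1, hs⟩ then 2 else 0) x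
            = 2 * ∑ p ∈ ({p : Fin n × Fin n | p.1 < p.2} : Finset _),
                ω ⟨1, hs⟩ (x p.1) * ω ⟨1, hs⟩ (x p.2) := by
        push_cast
        linear_combination -2 * hgen
      rw [hch, hcast] at key
      exact key.trans h2
    -- expansion of `∑ ω₁²` via the structure constants
    have hU : ∑ i, ω ⟨1, hs⟩ (x i) ^ 2
        = a 0 * n + ∑ j ∈ Finset.univ.erase (0 : Fin s), a j * ∑ i, ω j (x i) := by
      calc ∑ i, ω ⟨1, hs⟩ (x i) ^ 2 = ∑ i, ∑ j, a j * ω j (x i) :=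
            Finset.sum_congr rfl fun i _ => ha (x i)
        _ = ∑ j, a j * ∑ i, ω j (x i) := by
            rw [Finset.sum_comm]
            exact Finset.sum_congr rfl fun j _ => (Finset.mul_sum _ _ _).symm
        _ = a 0 * ∑ i, ω 0 (x i) +
              ∑ j ∈ Finset.univ.erase (0 : Fin s), a j * ∑ i, ω j (x i) :=
            (Finset.add_sum_erase _ _ (Finset.mem_univ 0)).symm
        _ = _ := by simp [hω0]
    have hsum' : ∑ j ∈ Finset.univ.erase (0 : Fin s),
        a j * Ω (fun i => if i = 0 then n - 1 else if i = j then 1 else 0) x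
          = (n : ℂ)⁻¹ * ∑ j ∈ Finset.univ.erase (0 : Fin s), a j * ∑ i, ω j (x i) := by
      rw [Finset.mul_sum]
      refine Finset.sum_congr rfl fun j hj => ?_
      have h := hΩ1 j (Finset.ne_of_mem_erase hj)
      field_simp
      linear_combination a j * h
    have hΩ2' : Ω (fun i => if i = 0 then n - 2 else if i = ⟨1, hs⟩ then 2 else 0) x
        = ((∑ i, ω ⟨1, hs⟩ (x i)) ^ 2 - ∑ i, ω ⟨1, hs⟩ (x i) ^ 2) /
            ((n : ℂ) * ((n : ℂ) - 1)) := by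
      rw [eq_div_iff (mul_ne_zero hn0 hn1)]
      linear_combination hΩ2
    rw [hsum', hΩ2', hU]
    field_simp
    ring
end
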